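/- arXiv:1503.01585 — 3 statements merged into one kernel-verified Lean document; each statement's English description precedes it below -/
import Mathlib

section
/- Under the standing iterated-preunit hypotheses, let i_{A⊗V}, p_{A⊗V} split ∇_{A⊗V} with image A×V, and endow A×V with the monoid structure (product μ_{A×V} = p_{A⊗V}∘μ_{A⊗V}∘(i_{A⊗V}⊗i_{A⊗V}), unit p_{A⊗V}∘ν_V). Then the morphism ∇_{(A×V)⊗W} = (p_{A⊗V}⊗W)∘∇_{A⊗V⊗W}∘(i_{A⊗V}⊗W) : (A×V)⊗W → (A×V)⊗W is idempotent; moreover, if ∇_{A⊗V⊗W}∘(σ_V⊗W) = (((μ_A⊗V)∘(A⊗ψ_V))⊗W)∘(σ_V⊗ψ_W)∘(V⊗Δ⊗η_A), then ∇_{(A×V)⊗W} is a morphism of left A×V-modules for the action μ_{A×V}⊗W, i.e. ∇_{(A×V)⊗W}∘(μ_{A×V}⊗W) = (μ_{A×V}⊗W)∘((A×V)⊗∇_{(A×V)⊗W}). -/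
open CategoryTheory MonoidalCategory

namespace IteratedWCP

universe v u

variable {C : Type u} [Category.{v} C] [MonoidalCategory C]

/-- The monoid (algebra) axioms for `(A, η, μ)`. -/
def IsMonoid {A : C} (η : 𝟙_ C ⟶ A) (μ : A ⊗ A ⟶ A) : Prop :=
  (η ▷ A) ≫ μ = (λ_ A).hom ∧ (A ◁ η) ≫ μ = (ρ_ A).hom ∧
    (μ ▷ A) ≫ μ = (α_ A A A).hom ≫ (A ◁ μ) ≫ μ

/-- The compatibility condition
`(μ_A ⊗ V) ∘ (A ⊗ ψ) ∘ (ψ ⊗ A) = ψ ∘ (V ⊗ μ_A)`. -/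
def Compat {A V : C} (μ : A ⊗ A ⟶ A) (ψ : V ⊗ A ⟶ A ⊗ V) : Prop :=
  (ψ ▷ A) ≫ (α_ A V A).hom ≫ (A ◁ ψ) ≫ (α_ A A V).inv ≫ (μ ▷ V)
    = (α_ V A A).hom ≫ (V ◁ μ) ≫ ψ

/-- The idempotent `∇_{A⊗V} = (μ_A ⊗ V) ∘ (A ⊗ ψ) ∘ (A ⊗ V ⊗ η_A)`. -/
def nabla {A V : C} (η : 𝟙_ C ⟶ A) (μ : A ⊗ A ⟶ A) (ψ : V ⊗ A ⟶ A ⊗ V) :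
    A ⊗ V ⟶ A ⊗ V :=
  (ρ_ (A ⊗ V)).inv ≫ ((A ⊗ V) ◁ η) ≫ (α_ A V A).hom ≫ (A ◁ ψ) ≫
    (α_ A A V).inv ≫ (μ ▷ V)

/-- The twisted condition
`(μ_A ⊗ V) ∘ (A ⊗ ψ) ∘ (σ ⊗ A) = (μ_A ⊗ V) ∘ (A ⊗ σ) ∘ (ψ ⊗ V) ∘ (V ⊗ ψ)`. -/
def Twisted {A V : C} (μ : A ⊗ A ⟶ A) (ψ : V ⊗ A ⟶ A ⊗ V)
    (σ : V ⊗ V ⟶ A ⊗ V) : Prop :=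
  (σ ▷ A) ≫ (α_ A V A).hom ≫ (A ◁ ψ) ≫ (α_ A A V).inv ≫ (μ ▷ V)
    = (α_ V V A).hom ≫ (V ◁ ψ) ≫ (α_ V A V).inv ≫ (ψ ▷ V) ≫ (α_ A V V).hom ≫
        (A ◁ σ) ≫ (α_ A A V).inv ≫ (μ ▷ V)

/-- The cocycle condition
`(μ_A ⊗ V) ∘ (A ⊗ σ) ∘ (σ ⊗ V) = (μ_A ⊗ V) ∘ (A ⊗ σ) ∘ (ψ ⊗ V) ∘ (V ⊗ σ)`. -/
def Cocycle {A V : C} (μ : A ⊗ A ⟶ A) (ψ : V ⊗ A ⟶ A ⊗ V)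
    (σ : V ⊗ V ⟶ A ⊗ V) : Prop :=
  (σ ▷ V) ≫ (α_ A V V).hom ≫ (A ◁ σ) ≫ (α_ A A V).inv ≫ (μ ▷ V)
    = (α_ V V V).hom ≫ (V ◁ σ) ≫ (α_ V A V).inv ≫ (ψ ▷ V) ≫ (α_ A V V).hom ≫
        (A ◁ σ) ≫ (α_ A A V).inv ≫ (μ ▷ V)

/-- Normalization : `∇_{A⊗V} ∘ σ = σ`. -/
def Normalized {A V : C} (η : 𝟙_ C ⟶ A) (μ : A ⊗ A ⟶ A) (ψ : V ⊗ A ⟶ A ⊗ V)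
    (σ : V ⊗ V ⟶ A ⊗ V) : Prop :=
  σ ≫ nabla η μ ψ = σ

/-- `(ψ_V ⊗ W) ∘ (V ⊗ ψ_W) : (V ⊗ W) ⊗ A ⟶ A ⊗ (V ⊗ W)`. -/
def psi2 {A V W : C} (ψV : V ⊗ A ⟶ A ⊗ V) (ψW : W ⊗ A ⟶ A ⊗ W) :
    (V ⊗ W) ⊗ A ⟶ A ⊗ (V ⊗ W) :=
  (α_ V W A).hom ≫ (V ◁ ψW) ≫ (α_ V A W).inv ≫ (ψV ▷ W) ≫ (α_ A V W).hom

/-- `ψ_{V⊗W} = (ψ_V ⊗ W) ∘ (V ⊗ ψ_W) ∘ (Δ ⊗ A)`. -/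
def psiVW {A V W : C} (ψV : V ⊗ A ⟶ A ⊗ V) (ψW : W ⊗ A ⟶ A ⊗ W)
    (Δ : V ⊗ W ⟶ V ⊗ W) : (V ⊗ W) ⊗ A ⟶ A ⊗ (V ⊗ W) :=
  (Δ ▷ A) ≫ psi2 ψV ψW

/-- `Δ` is a link morphism:
`ψ_{V⊗W} = (A ⊗ Δ) ∘ ψ_{V⊗W}` and `ψ_{V⊗W} = ∇_{A⊗V⊗W} ∘ (ψ_V ⊗ W) ∘ (V ⊗ ψ_W)`. -/
def IsLink {A V W : C} (η : 𝟙_ C ⟶ A) (μ : A ⊗ A ⟶ A)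
    (ψV : V ⊗ A ⟶ A ⊗ V) (ψW : W ⊗ A ⟶ A ⊗ W) (Δ : V ⊗ W ⟶ V ⊗ W) : Prop :=
  psiVW ψV ψW Δ = psiVW ψV ψW Δ ≫ (A ◁ Δ) ∧
  psiVW ψV ψW Δ = psi2 ψV ψW ≫ nabla η μ (psiVW ψV ψW Δ)

/-- The final multiplication step `(μ_A ⊗ V ⊗ W)` on `A ⊗ ((A ⊗ V) ⊗ W)`. -/
def muPart (V W : C) {A : C} (μ : A ⊗ A ⟶ A) :
    A ⊗ ((A ⊗ V) ⊗ W) ⟶ A ⊗ (V ⊗ W) :=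
  (A ◁ (α_ A V W).hom) ≫ (α_ A A (V ⊗ W)).inv ≫ (μ ▷ (V ⊗ W))

/-- Condition (i) of the definition of a twisting morphism:
`(ψ_V ⊗ W) ∘ (V ⊗ ψ_W) ∘ (τ ⊗ A) = (A ⊗ τ) ∘ (ψ_W ⊗ V) ∘ (W ⊗ ψ_V)`. -/
def TwistI {A V W : C} (ψV : V ⊗ A ⟶ A ⊗ V) (ψW : W ⊗ A ⟶ A ⊗ W)
    (τ : W ⊗ V ⟶ V ⊗ W) : Prop :=
  (τ ▷ A) ≫ psi2 ψV ψW
    = (α_ W V A).hom ≫ (W ◁ ψV) ≫ (α_ W A V).inv ≫ (ψW ▷ V) ≫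
        (α_ A W V).hom ≫ (A ◁ τ)

/-- Condition (ii) of the definition of a twisting morphism. -/
def TwistII {A V W : C} (μ : A ⊗ A ⟶ A) (ψV : V ⊗ A ⟶ A ⊗ V)
    (σV : V ⊗ V ⟶ A ⊗ V) (ψW : W ⊗ A ⟶ A ⊗ W) (σW : W ⊗ W ⟶ A ⊗ W)
    (τ : W ⊗ V ⟶ V ⊗ W) : Prop :=
  ((τ ▷ W) ▷ V) ≫ ((α_ V W W).hom ▷ V) ≫ ((V ◁ σW) ▷ V) ≫
      ((α_ V A W).inv ▷ V) ≫ (α_ (V ⊗ A) W V).hom ≫ (ψV ⊗ₘ τ) ≫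
      (α_ A V (V ⊗ W)).hom ≫ (A ◁ (α_ V V W).inv) ≫ (A ◁ (σV ▷ W)) ≫ muPart V W μ
    = (α_ (W ⊗ V) W V).hom ≫ ((W ⊗ V) ◁ τ) ≫ (α_ W V (V ⊗ W)).hom ≫
        (W ◁ (α_ V V W).inv) ≫ (W ◁ (σV ▷ W)) ≫ (W ◁ (α_ A V W).hom) ≫
        (α_ W A (V ⊗ W)).inv ≫ (ψW ▷ (V ⊗ W)) ≫ (α_ A W (V ⊗ W)).hom ≫
        (A ◁ (α_ W V W).inv) ≫ (A ◁ (τ ▷ W)) ≫ (A ◁ (α_ V W W).hom) ≫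
        (A ◁ (V ◁ σW)) ≫ (A ◁ (α_ V A W).inv) ≫ (A ◁ (ψV ▷ W)) ≫ muPart V W μ

/-- `σ_{V⊗W} = (μ_A ⊗ V ⊗ W) ∘ (A ⊗ ψ_V ⊗ W) ∘ (σ_V ⊗ σ_W) ∘ (V ⊗ τ ⊗ W)`. -/
def sigmaVW {A V W : C} (μ : A ⊗ A ⟶ A) (ψV : V ⊗ A ⟶ A ⊗ V)
    (σV : V ⊗ V ⟶ A ⊗ V) (σW : W ⊗ W ⟶ A ⊗ W) (τ : W ⊗ V ⟶ V ⊗ W) :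
    (V ⊗ W) ⊗ (V ⊗ W) ⟶ A ⊗ (V ⊗ W) :=
  (α_ V W (V ⊗ W)).hom ≫ (V ◁ (α_ W V W).inv) ≫ (V ◁ (τ ▷ W)) ≫
    (V ◁ (α_ V W W).hom) ≫ (α_ V V (W ⊗ W)).inv ≫ (σV ⊗ₘ σW) ≫
    (α_ A V (A ⊗ W)).hom ≫ (A ◁ (α_ V A W).inv) ≫ (A ◁ (ψV ▷ W)) ≫ muPart V W μ

/-- The three σ-compatibility conditions for `σ_{V⊗W}` and a link morphism `Δ`. -/
def SigmaCompat {A V W : C} (Δ : V ⊗ W ⟶ V ⊗ W)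
    (σ : (V ⊗ W) ⊗ (V ⊗ W) ⟶ A ⊗ (V ⊗ W)) : Prop :=
  σ = (Δ ▷ (V ⊗ W)) ≫ σ ∧ σ = ((V ⊗ W) ◁ Δ) ≫ σ ∧ σ = σ ≫ (A ◁ Δ)

/-- The weak crossed product multiplication
`μ_{A⊗V} = (μ_A ⊗ V) ∘ (μ_A ⊗ σ) ∘ (A ⊗ ψ ⊗ V)`. -/
def wmul {A V : C} (μ : A ⊗ A ⟶ A) (ψ : V ⊗ A ⟶ A ⊗ V) (σ : V ⊗ V ⟶ A ⊗ V) :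
    (A ⊗ V) ⊗ (A ⊗ V) ⟶ A ⊗ V :=
  (α_ A V (A ⊗ V)).hom ≫ (A ◁ (α_ V A V).inv) ≫ (A ◁ (ψ ▷ V)) ≫
    (A ◁ (α_ A V V).hom) ≫ (α_ A A (V ⊗ V)).inv ≫ (μ ⊗ₘ σ) ≫
    (α_ A A V).inv ≫ (μ ▷ V)

/-- `β_ν = (μ_A ⊗ V) ∘ (A ⊗ ν)`. -/
def beta {A V : C} (μ : A ⊗ A ⟶ A) (ν : 𝟙_ C ⟶ A ⊗ V) : A ⟶ A ⊗ V :=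
  (ρ_ A).inv ≫ (A ◁ ν) ≫ (α_ A A V).inv ≫ (μ ▷ V)

/-- Preunit equation (1):
`(μ_A ⊗ V) ∘ (A ⊗ σ) ∘ (ψ ⊗ V) ∘ (V ⊗ ν) = ∇_{A⊗V} ∘ (η_A ⊗ V)`. -/
def PreEq1 {A V : C} (η : 𝟙_ C ⟶ A) (μ : A ⊗ A ⟶ A) (ψ : V ⊗ A ⟶ A ⊗ V)
    (σ : V ⊗ V ⟶ A ⊗ V) (ν : 𝟙_ C ⟶ A ⊗ V) : Prop :=
  (ρ_ V).inv ≫ (V ◁ ν) ≫ (α_ V A V).inv ≫ (ψ ▷ V) ≫ (α_ A V V).hom ≫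
      (A ◁ σ) ≫ (α_ A A V).inv ≫ (μ ▷ V)
    = (λ_ V).inv ≫ (η ▷ V) ≫ nabla η μ ψ

/-- Preunit equation (2):
`(μ_A ⊗ V) ∘ (A ⊗ σ) ∘ (ν ⊗ V) = ∇_{A⊗V} ∘ (η_A ⊗ V)`. -/
def PreEq2 {A V : C} (η : 𝟙_ C ⟶ A) (μ : A ⊗ A ⟶ A) (ψ : V ⊗ A ⟶ A ⊗ V)
    (σ : V ⊗ V ⟶ A ⊗ V) (ν : 𝟙_ C ⟶ A ⊗ V) : Prop :=
  (λ_ V).inv ≫ (ν ▷ V) ≫ (α_ A V V).hom ≫ (A ◁ σ) ≫ (α_ A A V).inv ≫ (μ ▷ V)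
    = (λ_ V).inv ≫ (η ▷ V) ≫ nabla η μ ψ

/-- Preunit equation (3):
`(μ_A ⊗ V) ∘ (A ⊗ ψ) ∘ (ν ⊗ A) = β_ν`. -/
def PreEq3 {A V : C} (μ : A ⊗ A ⟶ A) (ψ : V ⊗ A ⟶ A ⊗ V)
    (ν : 𝟙_ C ⟶ A ⊗ V) : Prop :=
  (λ_ A).inv ≫ (ν ▷ A) ≫ (α_ A V A).hom ≫ (A ◁ ψ) ≫ (α_ A A V).inv ≫ (μ ▷ V)
    = beta μ ν

/-- `ν` is a preunit for the associative product `m` :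
`m ∘ (X ⊗ ν) = m ∘ (ν ⊗ X) = m ∘ (X ⊗ (m ∘ (ν ⊗ ν)))`. -/
def IsPreunit {X : C} (m : X ⊗ X ⟶ X) (ν : 𝟙_ C ⟶ X) : Prop :=
  (ρ_ X).inv ≫ (X ◁ ν) ≫ m = (λ_ X).inv ≫ (ν ▷ X) ≫ m ∧
  (λ_ X).inv ≫ (ν ▷ X) ≫ m
    = (ρ_ X).inv ≫ (X ◁ ((λ_ (𝟙_ C)).inv ≫ (ν ⊗ₘ ν) ≫ m)) ≫ m

/-- `ν_{V⊗W} = ∇_{A⊗V⊗W} ∘ (μ_A ⊗ V ⊗ W) ∘ (A ⊗ ψ_V ⊗ W) ∘ (ν_V ⊗ ν_W)`. -/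
def nuVW {A V W : C} (η : 𝟙_ C ⟶ A) (μ : A ⊗ A ⟶ A) (ψV : V ⊗ A ⟶ A ⊗ V)
    (ψW : W ⊗ A ⟶ A ⊗ W) (Δ : V ⊗ W ⟶ V ⊗ W)
    (νV : 𝟙_ C ⟶ A ⊗ V) (νW : 𝟙_ C ⟶ A ⊗ W) : 𝟙_ C ⟶ A ⊗ (V ⊗ W) :=
  (λ_ (𝟙_ C)).inv ≫ (νV ⊗ₘ νW) ≫ (α_ A V (A ⊗ W)).hom ≫ (A ◁ (α_ V A W).inv) ≫
    (A ◁ (ψV ▷ W)) ≫ muPart V W μ ≫ nabla η μ (psiVW ψV ψW Δ)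

/-- Iterated preunit condition (pre-1):
`(μ_A⊗V⊗W)∘(A⊗σ_V⊗W)∘(ψ_V⊗τ)∘(V⊗ψ_W⊗V)∘(Δ⊗ν_V) = ∇_{A⊗V⊗W}∘(η_A⊗V⊗W)`. -/
def IterPre1 {A V W : C} (η : 𝟙_ C ⟶ A) (μ : A ⊗ A ⟶ A)
    (ψV : V ⊗ A ⟶ A ⊗ V) (σV : V ⊗ V ⟶ A ⊗ V) (ψW : W ⊗ A ⟶ A ⊗ W)
    (τ : W ⊗ V ⟶ V ⊗ W) (Δ : V ⊗ W ⟶ V ⊗ W) (νV : 𝟙_ C ⟶ A ⊗ V) : Prop :=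
  (ρ_ (V ⊗ W)).inv ≫ (Δ ⊗ₘ νV) ≫ (α_ V W (A ⊗ V)).hom ≫ (V ◁ (α_ W A V).inv) ≫
      (V ◁ (ψW ▷ V)) ≫ (V ◁ (α_ A W V).hom) ≫ (α_ V A (W ⊗ V)).inv ≫ (ψV ⊗ₘ τ) ≫
      (α_ A V (V ⊗ W)).hom ≫ (A ◁ (α_ V V W).inv) ≫ (A ◁ (σV ▷ W)) ≫ muPart V W μ
    = (λ_ (V ⊗ W)).inv ≫ (η ▷ (V ⊗ W)) ≫ nabla η μ (psiVW ψV ψW Δ)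

/-- Iterated preunit condition (pre-2):
`(μ_A⊗V⊗W)∘(A⊗ψ_V⊗W)∘(A⊗V⊗σ_W)∘(A⊗τ⊗W)∘(ν_W⊗V⊗W) = ∇_{A⊗V⊗W}∘(η_A⊗V⊗W)`. -/
def IterPre2 {A V W : C} (η : 𝟙_ C ⟶ A) (μ : A ⊗ A ⟶ A)
    (ψV : V ⊗ A ⟶ A ⊗ V) (ψW : W ⊗ A ⟶ A ⊗ W) (σW : W ⊗ W ⟶ A ⊗ W)
    (τ : W ⊗ V ⟶ V ⊗ W) (Δ : V ⊗ W ⟶ V ⊗ W) (νW : 𝟙_ C ⟶ A ⊗ W) : Prop :=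
  (λ_ (V ⊗ W)).inv ≫ (νW ▷ (V ⊗ W)) ≫ (α_ A W (V ⊗ W)).hom ≫
      (A ◁ (α_ W V W).inv) ≫ (A ◁ (τ ▷ W)) ≫ (A ◁ (α_ V W W).hom) ≫
      (A ◁ (V ◁ σW)) ≫ (A ◁ (α_ V A W).inv) ≫ (A ◁ (ψV ▷ W)) ≫ muPart V W μ
    = (λ_ (V ⊗ W)).inv ≫ (η ▷ (V ⊗ W)) ≫ nabla η μ (psiVW ψV ψW Δ)

/-- `i_{A×V} = p_{A⊗V⊗W} ∘ (μ_A⊗V⊗W) ∘ (A⊗ψ_V⊗W) ∘ (i_{A⊗V} ⊗ ν_W)`. -/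
def iAV {A V W X Z : C} (μ : A ⊗ A ⟶ A) (ψV : V ⊗ A ⟶ A ⊗ V)
    (νW : 𝟙_ C ⟶ A ⊗ W) (iX : X ⟶ A ⊗ V) (p2 : A ⊗ (V ⊗ W) ⟶ Z) : X ⟶ Z :=
  (ρ_ X).inv ≫ (iX ⊗ₘ νW) ≫ (α_ A V (A ⊗ W)).hom ≫ (A ◁ (α_ V A W).inv) ≫
    (A ◁ (ψV ▷ W)) ≫ muPart V W μ ≫ p2

/-- `i_W = p_{A⊗V⊗W} ∘ (ν_V ⊗ W)`. -/
def iWmor {A V W Z : C} (νV : 𝟙_ C ⟶ A ⊗ V) (p2 : A ⊗ (V ⊗ W) ⟶ Z) : W ⟶ Z :=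
  (λ_ W).inv ≫ (νV ▷ W) ≫ (α_ A V W).hom ≫ p2

/-- `∇_{(A×V)⊗W} = (p_{A⊗V} ⊗ W) ∘ ∇_{A⊗V⊗W} ∘ (i_{A⊗V} ⊗ W)`. -/
def nabPrime {A V W X : C} (η : 𝟙_ C ⟶ A) (μ : A ⊗ A ⟶ A)
    (ψV : V ⊗ A ⟶ A ⊗ V) (ψW : W ⊗ A ⟶ A ⊗ W) (Δ : V ⊗ W ⟶ V ⊗ W)
    (iX : X ⟶ A ⊗ V) (pX : A ⊗ V ⟶ X) : X ⊗ W ⟶ X ⊗ W :=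
  (iX ▷ W) ≫ (α_ A V W).hom ≫ nabla η μ (psiVW ψV ψW Δ) ≫
    (α_ A V W).inv ≫ (pX ▷ W)

/-- Equality (new-it-1). -/
def NewIt1 {A V W : C} (η : 𝟙_ C ⟶ A) (μ : A ⊗ A ⟶ A)
    (ψV : V ⊗ A ⟶ A ⊗ V) (σV : V ⊗ V ⟶ A ⊗ V) (ψW : W ⊗ A ⟶ A ⊗ W)
    (τ : W ⊗ V ⟶ V ⊗ W) (Δ : V ⊗ W ⟶ V ⊗ W) (νW : 𝟙_ C ⟶ A ⊗ W) : Prop :=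
  (ρ_ (V ⊗ V)).inv ≫ ((V ⊗ V) ◁ νW) ≫ (α_ (V ⊗ V) A W).inv ≫
      (((σV ▷ A) ≫ (α_ A V A).hom ≫ (A ◁ ψV) ≫ (α_ A A V).inv ≫ (μ ▷ V)) ▷ W) ≫
      (α_ A V W).hom ≫ nabla η μ (psiVW ψV ψW Δ)
    = ((ρ_ V).inv ▷ V) ≫ ((V ◁ νW) ▷ V) ≫ ((α_ V A W).inv ▷ V) ≫
        (α_ (V ⊗ A) W V).hom ≫ (ψV ⊗ₘ τ) ≫ (α_ A V (V ⊗ W)).hom ≫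
        (A ◁ (α_ V V W).inv) ≫ (A ◁ (σV ▷ W)) ≫ muPart V W μ ≫
        nabla η μ (psiVW ψV ψW Δ)

/-- Equality (new-it-2). -/
def NewIt2 {A V W : C} (η : 𝟙_ C ⟶ A) (μ : A ⊗ A ⟶ A)
    (ψV : V ⊗ A ⟶ A ⊗ V) (σV : V ⊗ V ⟶ A ⊗ V) (ψW : W ⊗ A ⟶ A ⊗ W)
    (Δ : V ⊗ W ⟶ V ⊗ W) : Prop :=
  (σV ▷ W) ≫ (α_ A V W).hom ≫ nabla η μ (psiVW ψV ψW Δ)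
    = (α_ V V W).hom ≫ (V ◁ Δ) ≫ (ρ_ (V ⊗ (V ⊗ W))).inv ≫
        ((V ⊗ (V ⊗ W)) ◁ η) ≫ (α_ V (V ⊗ W) A).hom ≫ (V ◁ (α_ V W A).hom) ≫
        (α_ V V (W ⊗ A)).inv ≫ (σV ⊗ₘ ψW) ≫ (α_ A V (A ⊗ W)).hom ≫
        (A ◁ (α_ V A W).inv) ≫ (A ◁ (ψV ▷ W)) ≫ muPart V W μ

/-- Equality (new-it-3). -/
def NewIt3 {A V W : C} (η : 𝟙_ C ⟶ A) (μ : A ⊗ A ⟶ A)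
    (ψV : V ⊗ A ⟶ A ⊗ V) (ψW : W ⊗ A ⟶ A ⊗ W) (σW : W ⊗ W ⟶ A ⊗ W)
    (Δ : V ⊗ W ⟶ V ⊗ W) : Prop :=
  (V ◁ σW) ≫ (α_ V A W).inv ≫ (ψV ▷ W) ≫ (α_ A V W).hom ≫
      nabla η μ (psiVW ψV ψW Δ)
    = (α_ V W W).inv ≫ (Δ ▷ W) ≫ (α_ V W W).hom ≫ (V ◁ σW) ≫
        (α_ V A W).inv ≫ (ψV ▷ W) ≫ (α_ A V W).hom

/-- A weak distributive law of the monoid `S` over the monoid `T`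
(`lam : T ⊗ S ⟶ S ⊗ T`). -/
def WDL {T S : C} (ηT : 𝟙_ C ⟶ T) (μT : T ⊗ T ⟶ T) (ηS : 𝟙_ C ⟶ S)
    (μS : S ⊗ S ⟶ S) (lam : T ⊗ S ⟶ S ⊗ T) : Prop :=
  ((μT ▷ S) ≫ lam
      = (α_ T T S).hom ≫ (T ◁ lam) ≫ (α_ T S T).inv ≫ (lam ▷ T) ≫
          (α_ S T T).hom ≫ (S ◁ μT)) ∧
  ((T ◁ μS) ≫ lam
      = (α_ T S S).inv ≫ (lam ▷ S) ≫ (α_ S T S).hom ≫ (S ◁ lam) ≫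
          (α_ S S T).inv ≫ (μS ▷ T)) ∧
  ((((λ_ S).inv ≫ (ηT ▷ S) ≫ lam) ▷ T) ≫ (α_ S T T).hom ≫ (S ◁ μT)
      = (S ◁ ((ρ_ T).inv ≫ (T ◁ ηS) ≫ lam)) ≫ (α_ S S T).inv ≫ (μS ▷ T))

/-- The Yang–Baxter relation
`(S⊗λ2)∘(λ3⊗T)∘(D⊗λ1) = (λ1⊗D)∘(T⊗λ3)∘(λ2⊗S)`. -/
def YB {S T D : C} (l1 : T ⊗ S ⟶ S ⊗ T) (l2 : D ⊗ T ⟶ T ⊗ D)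
    (l3 : D ⊗ S ⟶ S ⊗ D) : Prop :=
  (α_ D T S).hom ≫ (D ◁ l1) ≫ (α_ D S T).inv ≫ (l3 ▷ T) ≫
      (α_ S D T).hom ≫ (S ◁ l2)
    = (l2 ▷ S) ≫ (α_ T D S).hom ≫ (T ◁ l3) ≫ (α_ T S D).inv ≫
        (l1 ▷ D) ≫ (α_ S T D).hom

/-- `σ_T = (S ⊗ μ_T) ∘ ((λ ∘ (T ⊗ η_S)) ⊗ T)`. -/
def sigWDL {S T : C} (ηS : 𝟙_ C ⟶ S) (μT : T ⊗ T ⟶ T)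
    (lam : T ⊗ S ⟶ S ⊗ T) : T ⊗ T ⟶ S ⊗ T :=
  (((ρ_ T).inv ≫ (T ◁ ηS) ≫ lam) ▷ T) ≫ (α_ S T T).hom ≫ (S ◁ μT)

/-- `∇_{S⊗T} = (μ_S ⊗ T) ∘ (S ⊗ (λ ∘ (T ⊗ η_S)))`. -/
def nabWDL {S T : C} (ηS : 𝟙_ C ⟶ S) (μS : S ⊗ S ⟶ S)
    (lam : T ⊗ S ⟶ S ⊗ T) : S ⊗ T ⟶ S ⊗ T :=
  (S ◁ ((ρ_ T).inv ≫ (T ◁ ηS) ≫ lam)) ≫ (α_ S S T).inv ≫ (μS ▷ T)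



/-! ### Auxiliary lemmas -/

section Aux

variable {A V W : C}

lemma aux_ins_nat {P Q R : C} (f : P ⟶ Q) (g : 𝟙_ C ⟶ R) :
    f ≫ (ρ_ Q).inv ≫ (Q ◁ g) = (ρ_ P).inv ≫ (P ◁ g) ≫ (f ▷ R) := by
  rw [whisker_exchange]; simp

/-- `x ↦ ψ(x ⊗ η)`. -/
def capp (η : 𝟙_ C ⟶ A) (ψ : V ⊗ A ⟶ A ⊗ V) : V ⟶ A ⊗ V :=
  (ρ_ V).inv ≫ (V ◁ η) ≫ ψ

variable (η : 𝟙_ C ⟶ A) (μ : A ⊗ A ⟶ A)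

lemma nabla_eq (ψ : V ⊗ A ⟶ A ⊗ V) :
    nabla η μ ψ = (A ◁ capp η ψ) ≫ (α_ A A V).inv ≫ (μ ▷ V) := by
  simp [nabla, capp]

lemma psi_nabla (ψ : V ⊗ A ⟶ A ⊗ V) (hA : IsMonoid η μ) (hψ : Compat μ ψ) :
    ψ ≫ nabla η μ ψ = ψ := by
  calc ψ ≫ nabla η μ ψ
      = (ψ ≫ (ρ_ (A ⊗ V)).inv ≫ ((A ⊗ V) ◁ η)) ≫ (α_ A V A).hom ≫ (A ◁ ψ) ≫
          (α_ A A V).inv ≫ (μ ▷ V) := by rw [nabla]; simp only [Category.assoc]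
    _ = (ρ_ (V ⊗ A)).inv ≫ ((V ⊗ A) ◁ η) ≫ (ψ ▷ A) ≫ (α_ A V A).hom ≫ (A ◁ ψ) ≫
          (α_ A A V).inv ≫ (μ ▷ V) := by rw [aux_ins_nat]; simp only [Category.assoc]
    _ = (ρ_ (V ⊗ A)).inv ≫ ((V ⊗ A) ◁ η) ≫ (α_ V A A).hom ≫ (V ◁ μ) ≫ ψ := by
          rw [hψ]
    _ = (V ◁ ((ρ_ A).inv ≫ ((A ◁ η) ≫ μ))) ≫ ψ := by monoidal
    _ = ψ := by rw [hA.2.1]; simp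

lemma mu_nabla (ψ : V ⊗ A ⟶ A ⊗ V) (hA : IsMonoid η μ) :
    (μ ▷ V) ≫ nabla η μ ψ
      = (α_ A A V).hom ≫ (A ◁ nabla η μ ψ) ≫ (α_ A A V).inv ≫ (μ ▷ V) := by
  calc (μ ▷ V) ≫ nabla η μ ψ
      = ((μ ▷ V) ≫ (ρ_ (A ⊗ V)).inv ≫ ((A ⊗ V) ◁ η)) ≫ (α_ A V A).hom ≫
          (A ◁ ψ) ≫ (α_ A A V).inv ≫ (μ ▷ V) := by
        rw [nabla]; simp only [Category.assoc]
    _ = (ρ_ ((A ⊗ A) ⊗ V)).inv ≫ (((A ⊗ A) ⊗ V) ◁ η) ≫ ((μ ▷ V) ▷ A) ≫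
          (α_ A V A).hom ≫ (A ◁ ψ) ≫ (α_ A A V).inv ≫ (μ ▷ V) := by
        rw [aux_ins_nat]; simp only [Category.assoc]
    _ = (ρ_ ((A ⊗ A) ⊗ V)).inv ≫ (((A ⊗ A) ⊗ V) ◁ η) ≫ (α_ (A ⊗ A) V A).hom ≫
          (μ ▷ (V ⊗ A)) ≫ (A ◁ ψ) ≫ (α_ A A V).inv ≫ (μ ▷ V) := by
        monoidal
    _ = (ρ_ ((A ⊗ A) ⊗ V)).inv ≫ (((A ⊗ A) ⊗ V) ◁ η) ≫ (α_ (A ⊗ A) V A).hom ≫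
          ((A ⊗ A) ◁ ψ) ≫ (μ ▷ (A ⊗ V)) ≫ (α_ A A V).inv ≫ (μ ▷ V) := by
        rw [← whisker_exchange_assoc]
    _ = (ρ_ ((A ⊗ A) ⊗ V)).inv ≫ (((A ⊗ A) ⊗ V) ◁ η) ≫ (α_ (A ⊗ A) V A).hom ≫
          ((A ⊗ A) ◁ ψ) ≫ (α_ (A ⊗ A) A V).inv ≫ (((μ ▷ A) ≫ μ) ▷ V) := by
        monoidal
    _ = (ρ_ ((A ⊗ A) ⊗ V)).inv ≫ (((A ⊗ A) ⊗ V) ◁ η) ≫ (α_ (A ⊗ A) V A).hom ≫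
          ((A ⊗ A) ◁ ψ) ≫ (α_ (A ⊗ A) A V).inv ≫
          (((α_ A A A).hom ≫ (A ◁ μ) ≫ μ) ▷ V) := by
        rw [hA.2.2]
    _ = (α_ A A V).hom ≫ (A ◁ nabla η μ ψ) ≫ (α_ A A V).inv ≫ (μ ▷ V) := by
        rw [nabla]; monoidal

/-- Generic absorption: if `M` commutes with left multiplication and absorbs `ψ`,
then `∇ ≫ M = ∇`. -/
lemma nabla_absorb (ψ : V ⊗ A ⟶ A ⊗ V) {M : A ⊗ V ⟶ A ⊗ V}
    (hμM : (μ ▷ V) ≫ M = (α_ A A V).hom ≫ (A ◁ M) ≫ (α_ A A V).inv ≫ (μ ▷ V))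
    (hψM : ψ ≫ M = ψ) :
    nabla η μ ψ ≫ M = nabla η μ ψ := by
  calc nabla η μ ψ ≫ M
      = (ρ_ (A ⊗ V)).inv ≫ ((A ⊗ V) ◁ η) ≫ (α_ A V A).hom ≫ (A ◁ ψ) ≫
          (α_ A A V).inv ≫ ((μ ▷ V) ≫ M) := by
        rw [nabla]; simp only [Category.assoc]
    _ = (ρ_ (A ⊗ V)).inv ≫ ((A ⊗ V) ◁ η) ≫ (α_ A V A).hom ≫ (A ◁ ψ) ≫
          (α_ A A V).inv ≫ (α_ A A V).hom ≫ (A ◁ M) ≫ (α_ A A V).inv ≫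
          (μ ▷ V) := by rw [hμM]
    _ = (ρ_ (A ⊗ V)).inv ≫ ((A ⊗ V) ◁ η) ≫ (α_ A V A).hom ≫
          (A ◁ (ψ ≫ M)) ≫ (α_ A A V).inv ≫ (μ ▷ V) := by
        simp only [Iso.inv_hom_id_assoc, MonoidalCategory.whiskerLeft_comp,
          Category.assoc]
    _ = nabla η μ ψ := by rw [hψM, nabla]

lemma nabla_idem (ψ : V ⊗ A ⟶ A ⊗ V) (hA : IsMonoid η μ) (hψ : Compat μ ψ) :
    nabla η μ ψ ≫ nabla η μ ψ = nabla η μ ψ :=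
  nabla_absorb η μ ψ (mu_nabla η μ ψ hA) (psi_nabla η μ ψ hA hψ)

lemma wmul_nabla (ψV : V ⊗ A ⟶ A ⊗ V) (σV : V ⊗ V ⟶ A ⊗ V)
    (hA : IsMonoid η μ) (hn : Normalized η μ ψV σV) :
    wmul μ ψV σV ≫ nabla η μ ψV = wmul μ ψV σV := by
  have hn' : σV ≫ nabla η μ ψV = σV := hn
  calc wmul μ ψV σV ≫ nabla η μ ψV
      = (α_ A V (A ⊗ V)).hom ≫ (A ◁ (α_ V A V).inv) ≫ (A ◁ (ψV ▷ V)) ≫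
          (A ◁ (α_ A V V).hom) ≫ (α_ A A (V ⊗ V)).inv ≫ (μ ⊗ₘ σV) ≫
          (α_ A A V).inv ≫ ((μ ▷ V) ≫ nabla η μ ψV) := by
        rw [wmul]; simp only [Category.assoc]
    _ = (α_ A V (A ⊗ V)).hom ≫ (A ◁ (α_ V A V).inv) ≫ (A ◁ (ψV ▷ V)) ≫
          (A ◁ (α_ A V V).hom) ≫ (α_ A A (V ⊗ V)).inv ≫
          ((μ ⊗ₘ σV) ≫ (A ◁ nabla η μ ψV)) ≫
          (α_ A A V).inv ≫ (μ ▷ V) := by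
        rw [mu_nabla η μ ψV hA]; simp only [Category.assoc, Iso.inv_hom_id_assoc]
    _ = (α_ A V (A ⊗ V)).hom ≫ (A ◁ (α_ V A V).inv) ≫ (A ◁ (ψV ▷ V)) ≫
          (A ◁ (α_ A V V).hom) ≫ (α_ A A (V ⊗ V)).inv ≫
          (μ ⊗ₘ (σV ≫ nabla η μ ψV)) ≫
          (α_ A A V).inv ≫ (μ ▷ V) := by
        rw [show (μ ⊗ₘ σV) ≫ (A ◁ nabla η μ ψV) = μ ⊗ₘ (σV ≫ nabla η μ ψV) by
          rw [← id_tensorHom, tensorHom_comp_tensorHom, Category.comp_id]]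
    _ = wmul μ ψV σV := by rw [hn', wmul]

end Aux

set_option maxHeartbeats 2000000

section Aux2

variable {A V W : C} (η : 𝟙_ C ⟶ A) (μ : A ⊗ A ⟶ A)
variable (ψV : V ⊗ A ⟶ A ⊗ V) (ψW : W ⊗ A ⟶ A ⊗ W) (Δ : V ⊗ W ⟶ V ⊗ W)

lemma compat_psi2 (hV : Compat μ ψV) (hW : Compat μ ψW) :
    Compat μ (psi2 ψV ψW) := by
  unfold Compat
  symm
  calc (α_ (V ⊗ W) A A).hom ≫ ((V ⊗ W) ◁ μ) ≫ psi2 ψV ψW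
      = 𝟙 (((V ⊗ W) ⊗ A) ⊗ A) ⊗≫
          (V ◁ ((α_ W A A).hom ≫ (W ◁ μ) ≫ ψW)) ⊗≫
          ((ψV ▷ W) ≫ (α_ A V W).hom) := by
        rw [psi2]; monoidal
    _ = 𝟙 (((V ⊗ W) ⊗ A) ⊗ A) ⊗≫
          (V ◁ ((ψW ▷ A) ≫ (α_ A W A).hom ≫ (A ◁ ψW) ≫ (α_ A A W).inv ≫
            (μ ▷ W))) ⊗≫
          ((ψV ▷ W) ≫ (α_ A V W).hom) := by
        rw [← hW]
    _ = 𝟙 (((V ⊗ W) ⊗ A) ⊗ A) ⊗≫ (V ◁ (ψW ▷ A)) ⊗≫ (V ◁ (A ◁ ψW)) ⊗≫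
          ((((α_ V A A).hom ≫ (V ◁ μ) ≫ ψV)) ▷ W) ⊗≫ (α_ A V W).hom ≫
          𝟙 (A ⊗ (V ⊗ W)) := by
        monoidal
    _ = 𝟙 (((V ⊗ W) ⊗ A) ⊗ A) ⊗≫ (V ◁ (ψW ▷ A)) ⊗≫ (V ◁ (A ◁ ψW)) ⊗≫
          (((ψV ▷ A) ≫ (α_ A V A).hom ≫ (A ◁ ψV) ≫ (α_ A A V).inv ≫
            (μ ▷ V)) ▷ W) ⊗≫ (α_ A V W).hom ≫ 𝟙 (A ⊗ (V ⊗ W)) := by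
        rw [← hV]
    _ = 𝟙 (((V ⊗ W) ⊗ A) ⊗ A) ⊗≫ (V ◁ (ψW ▷ A)) ⊗≫
          (((V ⊗ A) ◁ ψW) ≫ (ψV ▷ (A ⊗ W))) ⊗≫
          ((A ◁ ψV) ▷ W) ⊗≫ ((μ ▷ V) ▷ W) ⊗≫ (α_ A V W).hom ≫
          𝟙 (A ⊗ (V ⊗ W)) := by
        monoidal
    _ = 𝟙 (((V ⊗ W) ⊗ A) ⊗ A) ⊗≫ (V ◁ (ψW ▷ A)) ⊗≫
          ((ψV ▷ (W ⊗ A)) ≫ ((A ⊗ V) ◁ ψW)) ⊗≫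
          ((A ◁ ψV) ▷ W) ⊗≫ ((μ ▷ V) ▷ W) ⊗≫ (α_ A V W).hom ≫
          𝟙 (A ⊗ (V ⊗ W)) := by
        rw [whisker_exchange]
    _ = (psi2 ψV ψW ▷ A) ≫ (α_ A (V ⊗ W) A).hom ≫ (A ◁ psi2 ψV ψW) ≫
          (α_ A A (V ⊗ W)).inv ≫ (μ ▷ (V ⊗ W)) := by
        rw [psi2]; monoidal

lemma compat_psiVW (hV : Compat μ ψV) (hW : Compat μ ψW)
    (hΔ1 : psiVW ψV ψW Δ = psiVW ψV ψW Δ ≫ (A ◁ Δ)) :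
    Compat μ (psiVW ψV ψW Δ) := by
  unfold Compat
  calc (psiVW ψV ψW Δ ▷ A) ≫ (α_ A (V ⊗ W) A).hom ≫ (A ◁ psiVW ψV ψW Δ) ≫
        (α_ A A (V ⊗ W)).inv ≫ (μ ▷ (V ⊗ W))
      = ((psiVW ψV ψW Δ ≫ (A ◁ Δ)) ▷ A) ≫ (α_ A (V ⊗ W) A).hom ≫
          (A ◁ psi2 ψV ψW) ≫ (α_ A A (V ⊗ W)).inv ≫ (μ ▷ (V ⊗ W)) := by
        rw [psiVW]; monoidal
    _ = (psiVW ψV ψW Δ ▷ A) ≫ (α_ A (V ⊗ W) A).hom ≫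
          (A ◁ psi2 ψV ψW) ≫ (α_ A A (V ⊗ W)).inv ≫ (μ ▷ (V ⊗ W)) := by
        rw [← hΔ1]
    _ = ((Δ ▷ A) ▷ A) ≫ (psi2 ψV ψW ▷ A) ≫ (α_ A (V ⊗ W) A).hom ≫
          (A ◁ psi2 ψV ψW) ≫ (α_ A A (V ⊗ W)).inv ≫ (μ ▷ (V ⊗ W)) := by
        rw [psiVW]; simp only [comp_whiskerRight, Category.assoc]
    _ = ((Δ ▷ A) ▷ A) ≫ (α_ (V ⊗ W) A A).hom ≫ ((V ⊗ W) ◁ μ) ≫ psi2 ψV ψW := by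
        rw [compat_psi2 μ ψV ψW hV hW]
    _ = (α_ (V ⊗ W) A A).hom ≫ (Δ ▷ (A ⊗ A)) ≫ ((V ⊗ W) ◁ μ) ≫
          psi2 ψV ψW := by monoidal
    _ = (α_ (V ⊗ W) A A).hom ≫ ((V ⊗ W) ◁ μ) ≫ psiVW ψV ψW Δ := by
        rw [← whisker_exchange_assoc, psiVW]

lemma delta_capp :
    Δ ≫ capp η (psi2 ψV ψW) = capp η (psiVW ψV ψW Δ) := by
  calc Δ ≫ capp η (psi2 ψV ψW)
      = (Δ ≫ (ρ_ (V ⊗ W)).inv ≫ ((V ⊗ W) ◁ η)) ≫ psi2 ψV ψW := by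
        rw [capp]; simp only [Category.assoc]
    _ = ((ρ_ (V ⊗ W)).inv ≫ ((V ⊗ W) ◁ η) ≫ (Δ ▷ A)) ≫ psi2 ψV ψW := by
        rw [aux_ins_nat]
    _ = capp η (psiVW ψV ψW Δ) := by
        rw [capp, psiVW]; simp only [Category.assoc]

lemma psiVW_absorbM (hA : IsMonoid η μ) (hV : Compat μ ψV) :
    psiVW ψV ψW Δ ≫ (α_ A V W).inv ≫ (nabla η μ ψV ▷ W) ≫ (α_ A V W).hom
      = psiVW ψV ψW Δ := by
  calc psiVW ψV ψW Δ ≫ (α_ A V W).inv ≫ (nabla η μ ψV ▷ W) ≫ (α_ A V W).hom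
      = 𝟙 ((V ⊗ W) ⊗ A) ⊗≫ (Δ ▷ A) ⊗≫ (V ◁ ψW) ⊗≫
          (((ψV ≫ nabla η μ ψV) ▷ W) ≫ (α_ A V W).hom) := by
        rw [psiVW, psi2]; monoidal
    _ = 𝟙 ((V ⊗ W) ⊗ A) ⊗≫ (Δ ▷ A) ⊗≫ (V ◁ ψW) ⊗≫
          ((ψV ▷ W) ≫ (α_ A V W).hom) := by
        rw [psi_nabla η μ ψV hA hV]
    _ = psiVW ψV ψW Δ := by rw [psiVW, psi2]; monoidal

lemma conj_lin (hA : IsMonoid η μ) :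
    (μ ▷ (V ⊗ W)) ≫ (α_ A V W).inv ≫ (nabla η μ ψV ▷ W) ≫ (α_ A V W).hom
      = (α_ A A (V ⊗ W)).hom ≫
          (A ◁ ((α_ A V W).inv ≫ (nabla η μ ψV ▷ W) ≫ (α_ A V W).hom)) ≫
          (α_ A A (V ⊗ W)).inv ≫ (μ ▷ (V ⊗ W)) := by
  calc (μ ▷ (V ⊗ W)) ≫ (α_ A V W).inv ≫ (nabla η μ ψV ▷ W) ≫ (α_ A V W).hom
      = (α_ (A ⊗ A) V W).inv ≫ (((μ ▷ V) ≫ nabla η μ ψV) ▷ W) ≫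
          (α_ A V W).hom := by monoidal
    _ = (α_ (A ⊗ A) V W).inv ≫
          (((α_ A A V).hom ≫ (A ◁ nabla η μ ψV) ≫ (α_ A A V).inv ≫
            (μ ▷ V)) ▷ W) ≫ (α_ A V W).hom := by
        rw [mu_nabla η μ ψV hA]
    _ = (α_ A A (V ⊗ W)).hom ≫
          (A ◁ ((α_ A V W).inv ≫ (nabla η μ ψV ▷ W) ≫ (α_ A V W).hom)) ≫
          (α_ A A (V ⊗ W)).inv ≫ (μ ▷ (V ⊗ W)) := by monoidal

/-- L1 : `∇_{A⊗V⊗W}` absorbs `∇_{A⊗V} ⊗ W`. -/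
lemma nablaVW_absorb (hA : IsMonoid η μ) (hV : Compat μ ψV) :
    nabla η μ (psiVW ψV ψW Δ) ≫
        ((α_ A V W).inv ≫ (nabla η μ ψV ▷ W) ≫ (α_ A V W).hom)
      = nabla η μ (psiVW ψV ψW Δ) :=
  nabla_absorb η μ (psiVW ψV ψW Δ) (conj_lin η μ ψV hA)
    (psiVW_absorbM η μ ψV ψW Δ hA hV)

end Aux2


section Core

variable {A V W : C} (η : 𝟙_ C ⟶ A) (μ : A ⊗ A ⟶ A)
variable (ψV : V ⊗ A ⟶ A ⊗ V) (σV : V ⊗ V ⟶ A ⊗ V)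
variable (ψW : W ⊗ A ⟶ A ⊗ W) (Δ : V ⊗ W ⟶ V ⊗ W)

set_option maxHeartbeats 4000000 in
lemma coreL (hA : IsMonoid η μ) (htwV : Twisted μ ψV σV)
    (hni : NewIt2 η μ ψV σV ψW Δ) :
    (wmul μ ψV σV ▷ W) ≫ (α_ A V W).hom ≫ nabla η μ (psiVW ψV ψW Δ) ≫
        (α_ A V W).inv
      = 𝟙 (((A ⊗ V) ⊗ (A ⊗ V)) ⊗ W) ⊗≫
        (((A ⊗ V) ⊗ A) ◁ capp η (psiVW ψV ψW Δ)) ⊗≫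
        (A ◁ (ψV ▷ (A ⊗ (V ⊗ W)))) ⊗≫
        (A ◁ (A ◁ (ψV ▷ (V ⊗ W)))) ⊗≫
        (A ◁ (A ◁ (A ◁ ((α_ V V W).inv ≫ (σV ▷ W) ≫ (α_ A V W).hom)))) ⊗≫
        (A ◁ (A ◁ (μ ▷ (V ⊗ W)))) ⊗≫
        (A ◁ (μ ▷ (V ⊗ W))) ⊗≫
        (μ ▷ (V ⊗ W)) ⊗≫ (α_ A V W).inv := by
  unfold NewIt2 at hni
  calc (wmul μ ψV σV ▷ W) ≫ (α_ A V W).hom ≫ nabla η μ (psiVW ψV ψW Δ) ≫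
        (α_ A V W).inv
      = 𝟙 (((A ⊗ V) ⊗ (A ⊗ V)) ⊗ W) ⊗≫
          ((A ◁ ((α_ V A V).inv ≫ (ψV ▷ V) ≫ (α_ A V V).hom)) ▷ W) ⊗≫
          ((μ ⊗ₘ σV) ▷ W) ⊗≫
          ((μ ▷ (V ⊗ W)) ≫ nabla η μ (psiVW ψV ψW Δ)) ⊗≫
          (α_ A V W).inv := by
        rw [wmul]; monoidal
    _ = 𝟙 (((A ⊗ V) ⊗ (A ⊗ V)) ⊗ W) ⊗≫
          ((A ◁ ((α_ V A V).inv ≫ (ψV ▷ V) ≫ (α_ A V V).hom)) ▷ W) ⊗≫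
          ((μ ▷ (V ⊗ V)) ▷ W) ⊗≫
          (A ◁ ((σV ▷ W) ≫ (α_ A V W).hom ≫ nabla η μ (psiVW ψV ψW Δ))) ⊗≫
          (μ ▷ (V ⊗ W)) ⊗≫ (α_ A V W).inv := by
        rw [mu_nabla η μ (psiVW ψV ψW Δ) hA, MonoidalCategory.tensorHom_def]; monoidal
    _ = 𝟙 (((A ⊗ V) ⊗ (A ⊗ V)) ⊗ W) ⊗≫
          ((A ◁ ((α_ V A V).inv ≫ (ψV ▷ V) ≫ (α_ A V V).hom)) ▷ W) ⊗≫
          ((μ ▷ (V ⊗ V)) ▷ W) ⊗≫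
          (A ◁ ((α_ V V W).hom ≫ (V ◁ Δ) ≫ (ρ_ (V ⊗ (V ⊗ W))).inv ≫
            ((V ⊗ (V ⊗ W)) ◁ η) ≫ (α_ V (V ⊗ W) A).hom ≫
            (V ◁ (α_ V W A).hom) ≫ (α_ V V (W ⊗ A)).inv ≫ (σV ⊗ₘ ψW) ≫
            (α_ A V (A ⊗ W)).hom ≫ (A ◁ (α_ V A W).inv) ≫ (A ◁ (ψV ▷ W)) ≫
            muPart V W μ)) ⊗≫
          (μ ▷ (V ⊗ W)) ⊗≫ (α_ A V W).inv := by
        rw [hni]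
    _ = 𝟙 (((A ⊗ V) ⊗ (A ⊗ V)) ⊗ W) ⊗≫
          ((A ◁ ((α_ V A V).inv ≫ (ψV ▷ V) ≫ (α_ A V V).hom)) ▷ W) ⊗≫
          ((μ ▷ (V ⊗ V)) ▷ W) ⊗≫
          (A ◁ ((α_ V V W).hom ≫ (V ◁ Δ) ≫ (ρ_ (V ⊗ (V ⊗ W))).inv ≫
            ((V ⊗ (V ⊗ W)) ◁ η) ≫ (𝟙 ((V ⊗ (V ⊗ W)) ⊗ A) ⊗≫
              ((V ⊗ V) ◁ ψW) ⊗≫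
              (((σV ▷ A) ≫ (α_ A V A).hom ≫ (A ◁ ψV) ≫ (α_ A A V).inv ≫
                (μ ▷ V)) ▷ W) ⊗≫ (α_ A V W).hom))) ⊗≫
          (μ ▷ (V ⊗ W)) ⊗≫ (α_ A V W).inv := by
        rw [muPart, tensorHom_def']; monoidal
    _ = 𝟙 (((A ⊗ V) ⊗ (A ⊗ V)) ⊗ W) ⊗≫
          ((A ◁ ((α_ V A V).inv ≫ (ψV ▷ V) ≫ (α_ A V V).hom)) ▷ W) ⊗≫
          ((μ ▷ (V ⊗ V)) ▷ W) ⊗≫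
          (A ◁ ((α_ V V W).hom ≫ (V ◁ Δ) ≫ (ρ_ (V ⊗ (V ⊗ W))).inv ≫
            ((V ⊗ (V ⊗ W)) ◁ η) ≫ (𝟙 ((V ⊗ (V ⊗ W)) ⊗ A) ⊗≫
              ((V ⊗ V) ◁ ψW) ⊗≫
              (((α_ V V A).hom ≫ (V ◁ ψV) ≫ (α_ V A V).inv ≫ (ψV ▷ V) ≫
                (α_ A V V).hom ≫ (A ◁ σV) ≫ (α_ A A V).inv ≫
                (μ ▷ V)) ▷ W) ⊗≫ (α_ A V W).hom))) ⊗≫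
          (μ ▷ (V ⊗ W)) ⊗≫ (α_ A V W).inv := by
        rw [htwV]
    _ = 𝟙 (((A ⊗ V) ⊗ (A ⊗ V)) ⊗ W) ⊗≫
          ((A ◁ ((α_ V A V).inv ≫ (ψV ▷ V) ≫ (α_ A V V).hom)) ▷ W) ⊗≫
          ((μ ▷ (V ⊗ V)) ▷ W) ⊗≫
          (A ◁ ((α_ V V W).hom ≫ (V ◁ capp η (psiVW ψV ψW Δ)) ⊗≫
            (ψV ▷ (V ⊗ W)) ⊗≫
            (A ◁ ((α_ V V W).inv ≫ (σV ▷ W) ≫ (α_ A V W).hom)) ⊗≫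
            (μ ▷ (V ⊗ W)))) ⊗≫
          (μ ▷ (V ⊗ W)) ⊗≫ (α_ A V W).inv := by
        rw [← delta_capp η ψV ψW Δ, capp, psi2]; monoidal
    _ = 𝟙 (((A ⊗ V) ⊗ (A ⊗ V)) ⊗ W) ⊗≫
          ((A ◁ ((α_ V A V).inv ≫ (ψV ▷ V) ≫ (α_ A V V).hom)) ▷ W) ⊗≫
          ((μ ▷ ((V ⊗ V) ⊗ W)) ≫
            (A ◁ ((α_ V V W).hom ≫ (V ◁ capp η (psiVW ψV ψW Δ)) ⊗≫
              (ψV ▷ (V ⊗ W)) ⊗≫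
              (A ◁ ((α_ V V W).inv ≫ (σV ▷ W) ≫ (α_ A V W).hom)) ⊗≫
              (μ ▷ (V ⊗ W))))) ⊗≫
          (μ ▷ (V ⊗ W)) ⊗≫ (α_ A V W).inv := by
        monoidal
    _ = 𝟙 (((A ⊗ V) ⊗ (A ⊗ V)) ⊗ W) ⊗≫
          ((A ◁ ((α_ V A V).inv ≫ (ψV ▷ V) ≫ (α_ A V V).hom)) ▷ W) ⊗≫
          (((A ⊗ A) ◁ ((α_ V V W).hom ≫ (V ◁ capp η (psiVW ψV ψW Δ)) ⊗≫
              (ψV ▷ (V ⊗ W)) ⊗≫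
              (A ◁ ((α_ V V W).inv ≫ (σV ▷ W) ≫ (α_ A V W).hom)) ⊗≫
              (μ ▷ (V ⊗ W)))) ≫
            (μ ▷ (A ⊗ (V ⊗ W)))) ⊗≫
          (μ ▷ (V ⊗ W)) ⊗≫ (α_ A V W).inv := by
        rw [← whisker_exchange]
    _ = 𝟙 (((A ⊗ V) ⊗ (A ⊗ V)) ⊗ W) ⊗≫
          ((A ◁ ((α_ V A V).inv ≫ (ψV ▷ V) ≫ (α_ A V V).hom)) ▷ W) ⊗≫
          ((A ⊗ A) ◁ ((α_ V V W).hom ≫ (V ◁ capp η (psiVW ψV ψW Δ)) ⊗≫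
            (ψV ▷ (V ⊗ W)) ⊗≫
            (A ◁ ((α_ V V W).inv ≫ (σV ▷ W) ≫ (α_ A V W).hom)) ⊗≫
            (μ ▷ (V ⊗ W)))) ⊗≫
          (((μ ▷ A) ≫ μ) ▷ (V ⊗ W)) ⊗≫ (α_ A V W).inv := by
        monoidal
    _ = 𝟙 (((A ⊗ V) ⊗ (A ⊗ V)) ⊗ W) ⊗≫
          ((A ◁ ((α_ V A V).inv ≫ (ψV ▷ V) ≫ (α_ A V V).hom)) ▷ W) ⊗≫
          ((A ⊗ A) ◁ ((α_ V V W).hom ≫ (V ◁ capp η (psiVW ψV ψW Δ)) ⊗≫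
            (ψV ▷ (V ⊗ W)) ⊗≫
            (A ◁ ((α_ V V W).inv ≫ (σV ▷ W) ≫ (α_ A V W).hom)) ⊗≫
            (μ ▷ (V ⊗ W)))) ⊗≫
          (((α_ A A A).hom ≫ (A ◁ μ) ≫ μ) ▷ (V ⊗ W)) ⊗≫
          (α_ A V W).inv := by
        rw [hA.2.2]
    _ = 𝟙 (((A ⊗ V) ⊗ (A ⊗ V)) ⊗ W) ⊗≫
          (A ◁ ((ψV ▷ (V ⊗ W)) ≫ ((A ⊗ V) ◁ capp η (psiVW ψV ψW Δ)))) ⊗≫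
          (A ◁ (A ◁ (ψV ▷ (V ⊗ W)))) ⊗≫
          (A ◁ (A ◁ (A ◁ ((α_ V V W).inv ≫ (σV ▷ W) ≫ (α_ A V W).hom)))) ⊗≫
          (A ◁ (A ◁ (μ ▷ (V ⊗ W)))) ⊗≫
          (A ◁ (μ ▷ (V ⊗ W))) ⊗≫
          (μ ▷ (V ⊗ W)) ⊗≫ (α_ A V W).inv := by
        monoidal
    _ = 𝟙 (((A ⊗ V) ⊗ (A ⊗ V)) ⊗ W) ⊗≫
          (A ◁ (((V ⊗ A) ◁ capp η (psiVW ψV ψW Δ)) ≫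
            (ψV ▷ (A ⊗ (V ⊗ W))))) ⊗≫
          (A ◁ (A ◁ (ψV ▷ (V ⊗ W)))) ⊗≫
          (A ◁ (A ◁ (A ◁ ((α_ V V W).inv ≫ (σV ▷ W) ≫ (α_ A V W).hom)))) ⊗≫
          (A ◁ (A ◁ (μ ▷ (V ⊗ W)))) ⊗≫
          (A ◁ (μ ▷ (V ⊗ W))) ⊗≫
          (μ ▷ (V ⊗ W)) ⊗≫ (α_ A V W).inv := by
        rw [← whisker_exchange]
    _ = 𝟙 (((A ⊗ V) ⊗ (A ⊗ V)) ⊗ W) ⊗≫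
        (((A ⊗ V) ⊗ A) ◁ capp η (psiVW ψV ψW Δ)) ⊗≫
        (A ◁ (ψV ▷ (A ⊗ (V ⊗ W)))) ⊗≫
        (A ◁ (A ◁ (ψV ▷ (V ⊗ W)))) ⊗≫
        (A ◁ (A ◁ (A ◁ ((α_ V V W).inv ≫ (σV ▷ W) ≫ (α_ A V W).hom)))) ⊗≫
        (A ◁ (A ◁ (μ ▷ (V ⊗ W)))) ⊗≫
        (A ◁ (μ ▷ (V ⊗ W))) ⊗≫
        (μ ▷ (V ⊗ W)) ⊗≫ (α_ A V W).inv := by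
        monoidal

end Core


section Core2

variable {A V W : C} (η : 𝟙_ C ⟶ A) (μ : A ⊗ A ⟶ A)
variable (ψV : V ⊗ A ⟶ A ⊗ V) (σV : V ⊗ V ⟶ A ⊗ V)
variable (ψW : W ⊗ A ⟶ A ⊗ W) (Δ : V ⊗ W ⟶ V ⊗ W)

set_option maxHeartbeats 4000000 in
lemma coreR (hA : IsMonoid η μ) (hψV : Compat μ ψV) :
    (α_ (A ⊗ V) (A ⊗ V) W).hom ≫
        ((A ⊗ V) ◁ ((α_ A V W).hom ≫ nabla η μ (psiVW ψV ψW Δ) ≫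
          (α_ A V W).inv)) ≫
        (α_ (A ⊗ V) (A ⊗ V) W).inv ≫ (wmul μ ψV σV ▷ W)
      = 𝟙 (((A ⊗ V) ⊗ (A ⊗ V)) ⊗ W) ⊗≫
        (((A ⊗ V) ⊗ A) ◁ capp η (psiVW ψV ψW Δ)) ⊗≫
        (A ◁ (ψV ▷ (A ⊗ (V ⊗ W)))) ⊗≫
        (A ◁ (A ◁ (ψV ▷ (V ⊗ W)))) ⊗≫
        (A ◁ (A ◁ (A ◁ ((α_ V V W).inv ≫ (σV ▷ W) ≫ (α_ A V W).hom)))) ⊗≫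
        (A ◁ (A ◁ (μ ▷ (V ⊗ W)))) ⊗≫
        (A ◁ (μ ▷ (V ⊗ W))) ⊗≫
        (μ ▷ (V ⊗ W)) ⊗≫ (α_ A V W).inv := by
  calc (α_ (A ⊗ V) (A ⊗ V) W).hom ≫
        ((A ⊗ V) ◁ ((α_ A V W).hom ≫ nabla η μ (psiVW ψV ψW Δ) ≫
          (α_ A V W).inv)) ≫
        (α_ (A ⊗ V) (A ⊗ V) W).inv ≫ (wmul μ ψV σV ▷ W)
      = 𝟙 (((A ⊗ V) ⊗ (A ⊗ V)) ⊗ W) ⊗≫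
          (((A ⊗ V) ⊗ A) ◁ capp η (psiVW ψV ψW Δ)) ⊗≫
          (A ◁ (((α_ V A A).hom ≫ (V ◁ μ) ≫ ψV) ▷ (V ⊗ W))) ⊗≫
          (A ◁ (A ◁ ((α_ V V W).inv ≫ (σV ▷ W) ≫ (α_ A V W).hom))) ⊗≫
          (μ ▷ (A ⊗ (V ⊗ W))) ⊗≫
          (μ ▷ (V ⊗ W)) ⊗≫ (α_ A V W).inv := by
        rw [nabla_eq, wmul, tensorHom_def']; monoidal
    _ = 𝟙 (((A ⊗ V) ⊗ (A ⊗ V)) ⊗ W) ⊗≫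
          (((A ⊗ V) ⊗ A) ◁ capp η (psiVW ψV ψW Δ)) ⊗≫
          (A ◁ (((ψV ▷ A) ≫ (α_ A V A).hom ≫ (A ◁ ψV) ≫ (α_ A A V).inv ≫
            (μ ▷ V)) ▷ (V ⊗ W))) ⊗≫
          (A ◁ (A ◁ ((α_ V V W).inv ≫ (σV ▷ W) ≫ (α_ A V W).hom))) ⊗≫
          (μ ▷ (A ⊗ (V ⊗ W))) ⊗≫
          (μ ▷ (V ⊗ W)) ⊗≫ (α_ A V W).inv := by
        rw [← hψV]
    _ = 𝟙 (((A ⊗ V) ⊗ (A ⊗ V)) ⊗ W) ⊗≫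
          (((A ⊗ V) ⊗ A) ◁ capp η (psiVW ψV ψW Δ)) ⊗≫
          (A ◁ (ψV ▷ (A ⊗ (V ⊗ W)))) ⊗≫
          (A ◁ (A ◁ (ψV ▷ (V ⊗ W)))) ⊗≫
          (A ◁ ((μ ▷ (V ⊗ (V ⊗ W))) ≫
            (A ◁ ((α_ V V W).inv ≫ (σV ▷ W) ≫ (α_ A V W).hom)))) ⊗≫
          (μ ▷ (A ⊗ (V ⊗ W))) ⊗≫
          (μ ▷ (V ⊗ W)) ⊗≫ (α_ A V W).inv := by
        monoidal
    _ = 𝟙 (((A ⊗ V) ⊗ (A ⊗ V)) ⊗ W) ⊗≫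
          (((A ⊗ V) ⊗ A) ◁ capp η (psiVW ψV ψW Δ)) ⊗≫
          (A ◁ (ψV ▷ (A ⊗ (V ⊗ W)))) ⊗≫
          (A ◁ (A ◁ (ψV ▷ (V ⊗ W)))) ⊗≫
          (A ◁ (((A ⊗ A) ◁ ((α_ V V W).inv ≫ (σV ▷ W) ≫ (α_ A V W).hom)) ≫
            (μ ▷ (A ⊗ (V ⊗ W))))) ⊗≫
          (μ ▷ (A ⊗ (V ⊗ W))) ⊗≫
          (μ ▷ (V ⊗ W)) ⊗≫ (α_ A V W).inv := by
        rw [← whisker_exchange]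
    _ = 𝟙 (((A ⊗ V) ⊗ (A ⊗ V)) ⊗ W) ⊗≫
          (((A ⊗ V) ⊗ A) ◁ capp η (psiVW ψV ψW Δ)) ⊗≫
          (A ◁ (ψV ▷ (A ⊗ (V ⊗ W)))) ⊗≫
          (A ◁ (A ◁ (ψV ▷ (V ⊗ W)))) ⊗≫
          (A ◁ (A ◁ (A ◁ ((α_ V V W).inv ≫ (σV ▷ W) ≫ (α_ A V W).hom)))) ⊗≫
          (A ◁ (μ ▷ (A ⊗ (V ⊗ W)))) ⊗≫
          (((μ ▷ A) ≫ μ) ▷ (V ⊗ W)) ⊗≫ (α_ A V W).inv := by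
        monoidal
    _ = 𝟙 (((A ⊗ V) ⊗ (A ⊗ V)) ⊗ W) ⊗≫
          (((A ⊗ V) ⊗ A) ◁ capp η (psiVW ψV ψW Δ)) ⊗≫
          (A ◁ (ψV ▷ (A ⊗ (V ⊗ W)))) ⊗≫
          (A ◁ (A ◁ (ψV ▷ (V ⊗ W)))) ⊗≫
          (A ◁ (A ◁ (A ◁ ((α_ V V W).inv ≫ (σV ▷ W) ≫ (α_ A V W).hom)))) ⊗≫
          (A ◁ (μ ▷ (A ⊗ (V ⊗ W)))) ⊗≫
          (((α_ A A A).hom ≫ (A ◁ μ) ≫ μ) ▷ (V ⊗ W)) ⊗≫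
          (α_ A V W).inv := by
        rw [hA.2.2]
    _ = 𝟙 (((A ⊗ V) ⊗ (A ⊗ V)) ⊗ W) ⊗≫
          (((A ⊗ V) ⊗ A) ◁ capp η (psiVW ψV ψW Δ)) ⊗≫
          (A ◁ (ψV ▷ (A ⊗ (V ⊗ W)))) ⊗≫
          (A ◁ (A ◁ (ψV ▷ (V ⊗ W)))) ⊗≫
          (A ◁ (A ◁ (A ◁ ((α_ V V W).inv ≫ (σV ▷ W) ≫ (α_ A V W).hom)))) ⊗≫
          (A ◁ (((μ ▷ A) ≫ μ) ▷ (V ⊗ W))) ⊗≫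
          (μ ▷ (V ⊗ W)) ⊗≫ (α_ A V W).inv := by
        monoidal
    _ = 𝟙 (((A ⊗ V) ⊗ (A ⊗ V)) ⊗ W) ⊗≫
          (((A ⊗ V) ⊗ A) ◁ capp η (psiVW ψV ψW Δ)) ⊗≫
          (A ◁ (ψV ▷ (A ⊗ (V ⊗ W)))) ⊗≫
          (A ◁ (A ◁ (ψV ▷ (V ⊗ W)))) ⊗≫
          (A ◁ (A ◁ (A ◁ ((α_ V V W).inv ≫ (σV ▷ W) ≫ (α_ A V W).hom)))) ⊗≫
          (A ◁ (((α_ A A A).hom ≫ (A ◁ μ) ≫ μ) ▷ (V ⊗ W))) ⊗≫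
          (μ ▷ (V ⊗ W)) ⊗≫ (α_ A V W).inv := by
        rw [hA.2.2]
    _ = 𝟙 (((A ⊗ V) ⊗ (A ⊗ V)) ⊗ W) ⊗≫
        (((A ⊗ V) ⊗ A) ◁ capp η (psiVW ψV ψW Δ)) ⊗≫
        (A ◁ (ψV ▷ (A ⊗ (V ⊗ W)))) ⊗≫
        (A ◁ (A ◁ (ψV ▷ (V ⊗ W)))) ⊗≫
        (A ◁ (A ◁ (A ◁ ((α_ V V W).inv ≫ (σV ▷ W) ≫ (α_ A V W).hom)))) ⊗≫
        (A ◁ (A ◁ (μ ▷ (V ⊗ W)))) ⊗≫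
        (A ◁ (μ ▷ (V ⊗ W))) ⊗≫
        (μ ▷ (V ⊗ W)) ⊗≫ (α_ A V W).inv := by
        monoidal

end Core2


theorem statement11 {A V W : C} (η : 𝟙_ C ⟶ A) (μ : A ⊗ A ⟶ A)
    (ψV : V ⊗ A ⟶ A ⊗ V) (σV : V ⊗ V ⟶ A ⊗ V)
    (ψW : W ⊗ A ⟶ A ⊗ W) (σW : W ⊗ W ⟶ A ⊗ W)
    (Δ : V ⊗ W ⟶ V ⊗ W) (τ : W ⊗ V ⟶ V ⊗ W)
    (hA : IsMonoid η μ) (hψV : Compat μ ψV) (hψW : Compat μ ψW)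
    (htwV : Twisted μ ψV σV) (htwW : Twisted μ ψW σW)
    (hcoV : Cocycle μ ψV σV) (hcoW : Cocycle μ ψW σW)
    (hnV : Normalized η μ ψV σV) (hnW : Normalized η μ ψW σW)
    (hΔ : IsLink η μ ψV ψW Δ)
    (hτ1 : TwistI ψV ψW τ) (hτ2 : TwistII μ ψV σV ψW σW τ)
    (hσ : SigmaCompat Δ (sigmaVW μ ψV σV σW τ))
    (νV : 𝟙_ C ⟶ A ⊗ V) (νW : 𝟙_ C ⟶ A ⊗ W)
    (hp1V : PreEq1 η μ ψV σV νV) (hp2V : PreEq2 η μ ψV σV νV)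
    (hp3V : PreEq3 μ ψV νV)
    (hp1W : PreEq1 η μ ψW σW νW) (hp2W : PreEq2 η μ ψW σW νW)
    (hp3W : PreEq3 μ ψW νW)
    (huV : IsPreunit (wmul μ ψV σV) νV) (huW : IsPreunit (wmul μ ψW σW) νW)
    (hip1 : IterPre1 η μ ψV σV ψW τ Δ νV)
    (hip2 : IterPre2 η μ ψV ψW σW τ Δ νW)
    {X : C} (iX : X ⟶ A ⊗ V) (pX : A ⊗ V ⟶ X)
    (hX1 : pX ≫ iX = nabla η μ ψV) (hX2 : iX ≫ pX = 𝟙 X) :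
    nabPrime η μ ψV ψW Δ iX pX ≫ nabPrime η μ ψV ψW Δ iX pX
        = nabPrime η μ ψV ψW Δ iX pX ∧
      (NewIt2 η μ ψV σV ψW Δ →
        (((iX ⊗ₘ iX) ≫ wmul μ ψV σV ≫ pX) ▷ W) ≫ nabPrime η μ ψV ψW Δ iX pX
          = (α_ X X W).hom ≫ (X ◁ nabPrime η μ ψV ψW Δ iX pX) ≫
              (α_ X X W).inv ≫ (((iX ⊗ₘ iX) ≫ wmul μ ψV σV ≫ pX) ▷ W)) := by
  have hcompat : Compat μ (psiVW ψV ψW Δ) :=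
    compat_psiVW μ ψV ψW Δ hψV hψW hΔ.1
  have habs2 : nabla η μ (psiVW ψV ψW Δ) ≫ (α_ A V W).inv ≫
        (nabla η μ ψV ▷ W)
      = nabla η μ (psiVW ψV ψW Δ) ≫ (α_ A V W).inv := by
    calc nabla η μ (psiVW ψV ψW Δ) ≫ (α_ A V W).inv ≫ (nabla η μ ψV ▷ W)
        = (nabla η μ (psiVW ψV ψW Δ) ≫ ((α_ A V W).inv ≫
            (nabla η μ ψV ▷ W) ≫ (α_ A V W).hom)) ≫ (α_ A V W).inv := by
          simp
      _ = nabla η μ (psiVW ψV ψW Δ) ≫ (α_ A V W).inv := by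
          rw [nablaVW_absorb η μ ψV ψW Δ hA hψV]
  constructor
  · rw [nabPrime]
    simp only [Category.assoc]
    slice_lhs 5 6 => rw [← comp_whiskerRight, hX1]
    slice_lhs 3 5 => rw [habs2]
    simp only [Category.assoc, Iso.inv_hom_id_assoc]
    slice_lhs 3 4 =>
      rw [nabla_idem η μ (psiVW ψV ψW Δ) hA hcompat]
    simp only [Category.assoc]
  · intro hni
    have key : (wmul μ ψV σV ▷ W) ≫ (α_ A V W).hom ≫
          nabla η μ (psiVW ψV ψW Δ) ≫ (α_ A V W).inv
        = (α_ (A ⊗ V) (A ⊗ V) W).hom ≫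
            ((A ⊗ V) ◁ ((α_ A V W).hom ≫ nabla η μ (psiVW ψV ψW Δ) ≫
              (α_ A V W).inv)) ≫
            (α_ (A ⊗ V) (A ⊗ V) W).inv ≫ (wmul μ ψV σV ▷ W) :=
      (coreL η μ ψV σV ψW Δ hA htwV hni).trans
        (coreR η μ ψV σV ψW Δ hA hψV).symm
    have habs : nabPrime η μ ψV ψW Δ iX pX ≫ (iX ▷ W)
        = (iX ▷ W) ≫ (α_ A V W).hom ≫ nabla η μ (psiVW ψV ψW Δ) ≫
            (α_ A V W).inv := by
      rw [nabPrime]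
      simp only [Category.assoc]
      slice_lhs 5 6 => rw [← comp_whiskerRight, hX1]
      slice_lhs 3 5 => rw [habs2]
    have hL : (((iX ⊗ₘ iX) ≫ wmul μ ψV σV ≫ pX) ▷ W) ≫
          nabPrime η μ ψV ψW Δ iX pX
        = ((iX ⊗ₘ iX) ▷ W) ≫ ((wmul μ ψV σV ▷ W) ≫ (α_ A V W).hom ≫
            nabla η μ (psiVW ψV ψW Δ) ≫ (α_ A V W).inv) ≫ (pX ▷ W) := by
      rw [nabPrime]
      simp only [comp_whiskerRight, Category.assoc]
      slice_lhs 3 4 => rw [← comp_whiskerRight, hX1]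
      slice_lhs 2 3 =>
        rw [← comp_whiskerRight, wmul_nabla η μ ψV σV hA hnV]
      simp only [Category.assoc]
    have hR : (α_ X X W).hom ≫ (X ◁ nabPrime η μ ψV ψW Δ iX pX) ≫
          (α_ X X W).inv ≫ (((iX ⊗ₘ iX) ≫ wmul μ ψV σV ≫ pX) ▷ W)
        = ((iX ⊗ₘ iX) ▷ W) ≫ ((α_ (A ⊗ V) (A ⊗ V) W).hom ≫
            ((A ⊗ V) ◁ ((α_ A V W).hom ≫ nabla η μ (psiVW ψV ψW Δ) ≫
              (α_ A V W).inv)) ≫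
            (α_ (A ⊗ V) (A ⊗ V) W).inv ≫ (wmul μ ψV σV ▷ W)) ≫
          (pX ▷ W) := by
      calc (α_ X X W).hom ≫ (X ◁ nabPrime η μ ψV ψW Δ iX pX) ≫
            (α_ X X W).inv ≫ (((iX ⊗ₘ iX) ≫ wmul μ ψV σV ≫ pX) ▷ W)
          = (α_ X X W).hom ≫ (X ◁ nabPrime η μ ψV ψW Δ iX pX) ≫
              (iX ▷ (X ⊗ W)) ≫ ((A ⊗ V) ◁ (iX ▷ W)) ≫
              (α_ (A ⊗ V) (A ⊗ V) W).inv ≫ (wmul μ ψV σV ▷ W) ≫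
              (pX ▷ W) := by
            rw [MonoidalCategory.tensorHom_def]
            simp only [comp_whiskerRight, Category.assoc]
            monoidal
        _ = (α_ X X W).hom ≫ (iX ▷ (X ⊗ W)) ≫
              ((A ⊗ V) ◁ nabPrime η μ ψV ψW Δ iX pX) ≫
              ((A ⊗ V) ◁ (iX ▷ W)) ≫
              (α_ (A ⊗ V) (A ⊗ V) W).inv ≫ (wmul μ ψV σV ▷ W) ≫
              (pX ▷ W) := by
            rw [whisker_exchange_assoc]
        _ = (α_ X X W).hom ≫ (iX ▷ (X ⊗ W)) ≫
              ((A ⊗ V) ◁ (nabPrime η μ ψV ψW Δ iX pX ≫ (iX ▷ W))) ≫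
              (α_ (A ⊗ V) (A ⊗ V) W).inv ≫ (wmul μ ψV σV ▷ W) ≫
              (pX ▷ W) := by
            rw [← MonoidalCategory.whiskerLeft_comp_assoc]
        _ = (α_ X X W).hom ≫ (iX ▷ (X ⊗ W)) ≫
              ((A ⊗ V) ◁ ((iX ▷ W) ≫ (α_ A V W).hom ≫
                nabla η μ (psiVW ψV ψW Δ) ≫ (α_ A V W).inv)) ≫
              (α_ (A ⊗ V) (A ⊗ V) W).inv ≫ (wmul μ ψV σV ▷ W) ≫
              (pX ▷ W) := by
            rw [habs]
        _ = ((iX ⊗ₘ iX) ▷ W) ≫ ((α_ (A ⊗ V) (A ⊗ V) W).hom ≫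
              ((A ⊗ V) ◁ ((α_ A V W).hom ≫ nabla η μ (psiVW ψV ψW Δ) ≫
                (α_ A V W).inv)) ≫
              (α_ (A ⊗ V) (A ⊗ V) W).inv ≫ (wmul μ ψV σV ▷ W)) ≫
            (pX ▷ W) := by
            rw [MonoidalCategory.tensorHom_def]; monoidal
    rw [hL, hR, key]


end IteratedWCP
end

section
/- Under the standing iterated-preunit hypotheses, let i_{A⊗V}, p_{A⊗V} split ∇_{A⊗V} with image A×V, let i_{A⊗V⊗W}, p_{A⊗V⊗W} split ∇_{A⊗V⊗W} with image A×(V⊗W), and let i_{(A×V)⊗W}, p_{(A×V)⊗W} split the idempotent ∇_{(A×V)⊗W} = (p_{A⊗V}⊗W)∘∇_{A⊗V⊗W}∘(i_{A⊗V}⊗W) with image (A×V)×W. Then the morphism ω = p_{A⊗V⊗W}∘(i_{A⊗V}⊗W)∘i_{(A×V)⊗W} : (A×V)×W → A×(V⊗W) is an isomorphism with inverse ω⁻¹ = p_{(A×V)⊗W}∘(p_{A⊗V}⊗W)∘i_{A⊗V⊗W}. -/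
open CategoryTheory MonoidalCategory

namespace IteratedWCP

universe v u

variable {C : Type u} [Category.{v} C] [MonoidalCategory C]

section AuxWCP

/-- Left-multiplication operator: `T(k) = (μ ▷ X) ∘ α⁻¹ ∘ (A ◁ k)`. -/
def Tm {A : C} (μ : A ⊗ A ⟶ A) {X : C} (k : X ⟶ A ⊗ X) : A ⊗ X ⟶ A ⊗ X :=
  (A ◁ k) ≫ (α_ A A X).inv ≫ (μ ▷ X)

lemma Tm_comp {A : C} {η : 𝟙_ C ⟶ A} {μ : A ⊗ A ⟶ A} (hA : IsMonoid η μ)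
    {X : C} (k₁ k₂ : X ⟶ A ⊗ X) :
    Tm μ k₁ ≫ Tm μ k₂ = Tm μ (k₁ ≫ Tm μ k₂) := by
  simp only [Tm, MonoidalCategory.whiskerLeft_comp, Category.assoc]
  rw [← whisker_exchange_assoc]
  calc (A ◁ k₁) ≫ (α_ A A X).inv ≫ ((A ⊗ A) ◁ k₂) ≫ (μ ▷ (A ⊗ X)) ≫
        (α_ A A X).inv ≫ (μ ▷ X)
      = (A ◁ k₁) ≫ (α_ A A X).inv ≫ ((A ⊗ A) ◁ k₂) ≫ (α_ (A ⊗ A) A X).inv ≫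
        (((μ ▷ A) ≫ μ) ▷ X) := by
        simp only [comp_whiskerRight, Category.assoc]; monoidal
    _ = (A ◁ k₁) ≫ (α_ A A X).inv ≫ ((A ⊗ A) ◁ k₂) ≫ (α_ (A ⊗ A) A X).inv ≫
        (((α_ A A A).hom ≫ (A ◁ μ) ≫ μ) ▷ X) := by rw [hA.2.2]
    _ = (A ◁ k₁) ≫ (A ◁ (A ◁ k₂)) ≫ (A ◁ (α_ A A X).inv) ≫ (A ◁ (μ ▷ X)) ≫
        (α_ A A X).inv ≫ (μ ▷ X) := by
        simp only [comp_whiskerRight, Category.assoc]; monoidal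

lemma nabla_eq_Tm {A V : C} (η : 𝟙_ C ⟶ A) (μ : A ⊗ A ⟶ A) (ψ : V ⊗ A ⟶ A ⊗ V) :
    nabla η μ ψ = Tm μ ((ρ_ V).inv ≫ (V ◁ η) ≫ ψ) := by
  simp only [nabla, Tm, MonoidalCategory.whiskerLeft_comp, Category.assoc]
  monoidal

lemma whisker_Tm {A V : C} (μ : A ⊗ A ⟶ A) (g : V ⟶ A ⊗ V) (W : C) :
    (α_ A V W).inv ≫ (Tm μ g ▷ W) ≫ (α_ A V W).hom
      = Tm μ ((g ▷ W) ≫ (α_ A V W).hom) := by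
  simp only [Tm, comp_whiskerRight, MonoidalCategory.whiskerLeft_comp,
    Category.assoc]
  monoidal

lemma psi_absorb {A V : C} {η : 𝟙_ C ⟶ A} {μ : A ⊗ A ⟶ A} (hA : IsMonoid η μ)
    {ψ : V ⊗ A ⟶ A ⊗ V} (hψ : Compat μ ψ) :
    ψ ≫ nabla η μ ψ = ψ := by
  simp only [nabla]
  rw [rightUnitor_inv_naturality_assoc, ← whisker_exchange_assoc, hψ]
  calc (ρ_ (V ⊗ A)).inv ≫ ((V ⊗ A) ◁ η) ≫ (α_ V A A).hom ≫ (V ◁ μ) ≫ ψ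
      = (ρ_ (V ⊗ A)).inv ≫ (α_ V A (𝟙_ C)).hom ≫ (V ◁ (A ◁ η)) ≫ (V ◁ μ) ≫ ψ := by
        monoidal
    _ = (ρ_ (V ⊗ A)).inv ≫ (α_ V A (𝟙_ C)).hom ≫ (V ◁ ((A ◁ η) ≫ μ)) ≫ ψ := by
        simp only [MonoidalCategory.whiskerLeft_comp, Category.assoc]
    _ = (ρ_ (V ⊗ A)).inv ≫ (α_ V A (𝟙_ C)).hom ≫ (V ◁ (ρ_ A).hom) ≫ ψ := by
        rw [hA.2.1]
    _ = ψ := by monoidal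

lemma f0_eq {A V W : C} (η : 𝟙_ C ⟶ A) (ψV : V ⊗ A ⟶ A ⊗ V) (ψW : W ⊗ A ⟶ A ⊗ W) :
    (ρ_ (V ⊗ W)).inv ≫ ((V ⊗ W) ◁ η) ≫ psi2 ψV ψW
      = (V ◁ ((ρ_ W).inv ≫ (W ◁ η) ≫ ψW)) ≫ (α_ V A W).inv ≫ (ψV ▷ W) ≫
          (α_ A V W).hom := by
  simp only [psi2, MonoidalCategory.whiskerLeft_comp, Category.assoc]
  monoidal

lemma L4a {A V : C} {η : 𝟙_ C ⟶ A} {μ : A ⊗ A ⟶ A} {ψV : V ⊗ A ⟶ A ⊗ V}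
    (hA : IsMonoid η μ) (hψV : Compat μ ψV) :
    (((ρ_ V).inv ≫ (V ◁ η) ≫ ψV) ▷ A) ≫ (α_ A V A).hom ≫ (A ◁ ψV) ≫
      (α_ A A V).inv ≫ (μ ▷ V) = ψV := by
  simp only [comp_whiskerRight, Category.assoc]
  rw [hψV]
  calc (ρ_ V).inv ▷ A ≫ (V ◁ η) ▷ A ≫ (α_ V A A).hom ≫ (V ◁ μ) ≫ ψV
      = (ρ_ V).inv ▷ A ≫ (α_ V (𝟙_ C) A).hom ≫ (V ◁ (η ▷ A)) ≫ (V ◁ μ) ≫ ψV := by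
        monoidal
    _ = (ρ_ V).inv ▷ A ≫ (α_ V (𝟙_ C) A).hom ≫ (V ◁ ((η ▷ A) ≫ μ)) ≫ ψV := by
        simp only [MonoidalCategory.whiskerLeft_comp, Category.assoc]
    _ = (ρ_ V).inv ▷ A ≫ (α_ V (𝟙_ C) A).hom ≫ (V ◁ (λ_ A).hom) ≫ ψV := by
        rw [hA.1]
    _ = ψV := by monoidal

lemma kN {A V W : C} {η : 𝟙_ C ⟶ A} {μ : A ⊗ A ⟶ A} {ψV : V ⊗ A ⟶ A ⊗ V}
    (ψW : W ⊗ A ⟶ A ⊗ W) (hA : IsMonoid η μ) (hψV : Compat μ ψV) :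
    ((((ρ_ V).inv ≫ (V ◁ η) ≫ ψV) ▷ W) ≫ (α_ A V W).hom) ≫
        Tm μ ((ρ_ (V ⊗ W)).inv ≫ ((V ⊗ W) ◁ η) ≫ psi2 ψV ψW)
      = (ρ_ (V ⊗ W)).inv ≫ ((V ⊗ W) ◁ η) ≫ psi2 ψV ψW := by
  conv_lhs => rw [Tm, f0_eq]
  conv_rhs => rw [f0_eq]
  calc ((((ρ_ V).inv ≫ (V ◁ η) ≫ ψV) ▷ W) ≫ (α_ A V W).hom) ≫
        (A ◁ ((V ◁ ((ρ_ W).inv ≫ (W ◁ η) ≫ ψW)) ≫ (α_ V A W).inv ≫ (ψV ▷ W) ≫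
          (α_ A V W).hom)) ≫ (α_ A A (V ⊗ W)).inv ≫ (μ ▷ (V ⊗ W))
      = (((ρ_ V).inv ≫ (V ◁ η) ≫ ψV) ▷ W) ≫
          ((A ⊗ V) ◁ ((ρ_ W).inv ≫ (W ◁ η) ≫ ψW)) ≫ (α_ A V (A ⊗ W)).hom ≫
          (A ◁ (α_ V A W).inv) ≫ (A ◁ (ψV ▷ W)) ≫ (A ◁ (α_ A V W).hom) ≫
          (α_ A A (V ⊗ W)).inv ≫ (μ ▷ (V ⊗ W)) := by
        simp only [comp_whiskerRight, MonoidalCategory.whiskerLeft_comp,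
          Category.assoc]
        monoidal
    _ = (V ◁ ((ρ_ W).inv ≫ (W ◁ η) ≫ ψW)) ≫
          ((((ρ_ V).inv ≫ (V ◁ η) ≫ ψV)) ▷ (A ⊗ W)) ≫ (α_ A V (A ⊗ W)).hom ≫
          (A ◁ (α_ V A W).inv) ≫ (A ◁ (ψV ▷ W)) ≫ (A ◁ (α_ A V W).hom) ≫
          (α_ A A (V ⊗ W)).inv ≫ (μ ▷ (V ⊗ W)) := by
        rw [whisker_exchange_assoc]
    _ = (V ◁ ((ρ_ W).inv ≫ (W ◁ η) ≫ ψW)) ≫ (α_ V A W).inv ≫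
          (((((ρ_ V).inv ≫ (V ◁ η) ≫ ψV) ▷ A) ≫ (α_ A V A).hom ≫ (A ◁ ψV) ≫
            (α_ A A V).inv ≫ (μ ▷ V)) ▷ W) ≫ (α_ A V W).hom := by
        simp only [comp_whiskerRight, MonoidalCategory.whiskerLeft_comp,
          Category.assoc]
        monoidal
    _ = (V ◁ ((ρ_ W).inv ≫ (W ◁ η) ≫ ψW)) ≫ (α_ V A W).inv ≫ (ψV ▷ W) ≫
          (α_ A V W).hom := by rw [L4a hA hψV]

lemma psiVW_absorb {A V W : C} {η : 𝟙_ C ⟶ A} {μ : A ⊗ A ⟶ A}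
    {ψV : V ⊗ A ⟶ A ⊗ V} (ψW : W ⊗ A ⟶ A ⊗ W) (Δ : V ⊗ W ⟶ V ⊗ W)
    (hA : IsMonoid η μ) (hψV : Compat μ ψV) :
    psiVW ψV ψW Δ ≫ (α_ A V W).inv ≫ (nabla η μ ψV ▷ W) ≫ (α_ A V W).hom
      = psiVW ψV ψW Δ := by
  simp only [psiVW, psi2, Category.assoc, Iso.hom_inv_id_assoc]
  rw [← comp_whiskerRight_assoc, psi_absorb hA hψV]

lemma M1 {A V W : C} {η : 𝟙_ C ⟶ A} {μ : A ⊗ A ⟶ A} {ψV : V ⊗ A ⟶ A ⊗ V}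
    (ψW : W ⊗ A ⟶ A ⊗ W) (Δ : V ⊗ W ⟶ V ⊗ W) (hA : IsMonoid η μ)
    (hψV : Compat μ ψV)
    (hΔ2 : psiVW ψV ψW Δ = psi2 ψV ψW ≫ nabla η μ (psiVW ψV ψW Δ)) :
    (α_ A V W).inv ≫ (nabla η μ ψV ▷ W) ≫ (α_ A V W).hom ≫
        nabla η μ (psiVW ψV ψW Δ)
      = nabla η μ (psiVW ψV ψW Δ) := by
  have habs : Tm μ ((ρ_ (V ⊗ W)).inv ≫ ((V ⊗ W) ◁ η) ≫ psi2 ψV ψW) ≫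
      nabla η μ (psiVW ψV ψW Δ) = nabla η μ (psiVW ψV ψW Δ) := by
    conv_rhs => rw [nabla_eq_Tm η μ (psiVW ψV ψW Δ)]
    conv_rhs => rw [hΔ2]
    conv_rhs =>
      rw [show (ρ_ (V ⊗ W)).inv ≫ ((V ⊗ W) ◁ η) ≫
          (psi2 ψV ψW ≫ nabla η μ (psiVW ψV ψW Δ))
        = ((ρ_ (V ⊗ W)).inv ≫ ((V ⊗ W) ◁ η) ≫ psi2 ψV ψW) ≫
          nabla η μ (psiVW ψV ψW Δ) from by simp only [Category.assoc]]
    conv_rhs => rw [nabla_eq_Tm η μ (psiVW ψV ψW Δ), ← Tm_comp hA,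
      ← nabla_eq_Tm η μ (psiVW ψV ψW Δ)]
  calc (α_ A V W).inv ≫ (nabla η μ ψV ▷ W) ≫ (α_ A V W).hom ≫
        nabla η μ (psiVW ψV ψW Δ)
      = ((α_ A V W).inv ≫ (nabla η μ ψV ▷ W) ≫ (α_ A V W).hom) ≫
        Tm μ ((ρ_ (V ⊗ W)).inv ≫ ((V ⊗ W) ◁ η) ≫ psi2 ψV ψW) ≫
        nabla η μ (psiVW ψV ψW Δ) := by rw [habs]; simp only [Category.assoc]
    _ = (Tm μ ((((ρ_ V).inv ≫ (V ◁ η) ≫ ψV) ▷ W) ≫ (α_ A V W).hom) ≫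
        Tm μ ((ρ_ (V ⊗ W)).inv ≫ ((V ⊗ W) ◁ η) ≫ psi2 ψV ψW)) ≫
        nabla η μ (psiVW ψV ψW Δ) := by
        rw [nabla_eq_Tm η μ ψV, whisker_Tm, Category.assoc]
    _ = Tm μ (((((ρ_ V).inv ≫ (V ◁ η) ≫ ψV) ▷ W) ≫ (α_ A V W).hom) ≫
        Tm μ ((ρ_ (V ⊗ W)).inv ≫ ((V ⊗ W) ◁ η) ≫ psi2 ψV ψW)) ≫
        nabla η μ (psiVW ψV ψW Δ) := by rw [Tm_comp hA]
    _ = Tm μ ((ρ_ (V ⊗ W)).inv ≫ ((V ⊗ W) ◁ η) ≫ psi2 ψV ψW) ≫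
        nabla η μ (psiVW ψV ψW Δ) := by rw [kN ψW hA hψV]
    _ = nabla η μ (psiVW ψV ψW Δ) := habs

lemma M2 {A V W : C} {η : 𝟙_ C ⟶ A} {μ : A ⊗ A ⟶ A} {ψV : V ⊗ A ⟶ A ⊗ V}
    (ψW : W ⊗ A ⟶ A ⊗ W) (Δ : V ⊗ W ⟶ V ⊗ W) (hA : IsMonoid η μ)
    (hψV : Compat μ ψV) :
    nabla η μ (psiVW ψV ψW Δ) ≫ (α_ A V W).inv ≫ (nabla η μ ψV ▷ W) ≫
        (α_ A V W).hom
      = nabla η μ (psiVW ψV ψW Δ) := by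
  conv_lhs => rw [nabla_eq_Tm η μ (psiVW ψV ψW Δ)]
  rw [show (α_ A V W).inv ≫ (nabla η μ ψV ▷ W) ≫ (α_ A V W).hom
      = Tm μ ((((ρ_ V).inv ≫ (V ◁ η) ≫ ψV) ▷ W) ≫ (α_ A V W).hom) from by
    rw [nabla_eq_Tm η μ ψV, whisker_Tm]]
  rw [Tm_comp hA]
  rw [show ((ρ_ (V ⊗ W)).inv ≫ ((V ⊗ W) ◁ η) ≫ psiVW ψV ψW Δ) ≫
      Tm μ ((((ρ_ V).inv ≫ (V ◁ η) ≫ ψV) ▷ W) ≫ (α_ A V W).hom)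
    = (ρ_ (V ⊗ W)).inv ≫ ((V ⊗ W) ◁ η) ≫ psiVW ψV ψW Δ from ?_]
  · rw [← nabla_eq_Tm]
  · rw [← whisker_Tm, ← nabla_eq_Tm η μ ψV]
    simp only [Category.assoc]
    rw [psiVW_absorb ψW Δ hA hψV]

end AuxWCP


theorem statement12 {A V W : C} (η : 𝟙_ C ⟶ A) (μ : A ⊗ A ⟶ A)
    (ψV : V ⊗ A ⟶ A ⊗ V) (σV : V ⊗ V ⟶ A ⊗ V)
    (ψW : W ⊗ A ⟶ A ⊗ W) (σW : W ⊗ W ⟶ A ⊗ W)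
    (Δ : V ⊗ W ⟶ V ⊗ W) (τ : W ⊗ V ⟶ V ⊗ W)
    (hA : IsMonoid η μ) (hψV : Compat μ ψV) (hψW : Compat μ ψW)
    (htwV : Twisted μ ψV σV) (htwW : Twisted μ ψW σW)
    (hcoV : Cocycle μ ψV σV) (hcoW : Cocycle μ ψW σW)
    (hnV : Normalized η μ ψV σV) (hnW : Normalized η μ ψW σW)
    (hΔ : IsLink η μ ψV ψW Δ)
    (hτ1 : TwistI ψV ψW τ) (hτ2 : TwistII μ ψV σV ψW σW τ)
    (hσ : SigmaCompat Δ (sigmaVW μ ψV σV σW τ))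
    (νV : 𝟙_ C ⟶ A ⊗ V) (νW : 𝟙_ C ⟶ A ⊗ W)
    (hp1V : PreEq1 η μ ψV σV νV) (hp2V : PreEq2 η μ ψV σV νV)
    (hp3V : PreEq3 μ ψV νV)
    (hp1W : PreEq1 η μ ψW σW νW) (hp2W : PreEq2 η μ ψW σW νW)
    (hp3W : PreEq3 μ ψW νW)
    (huV : IsPreunit (wmul μ ψV σV) νV) (huW : IsPreunit (wmul μ ψW σW) νW)
    (hip1 : IterPre1 η μ ψV σV ψW τ Δ νV)
    (hip2 : IterPre2 η μ ψV ψW σW τ Δ νW)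
    {X Z : C} (iX : X ⟶ A ⊗ V) (pX : A ⊗ V ⟶ X)
    (hX1 : pX ≫ iX = nabla η μ ψV) (hX2 : iX ≫ pX = 𝟙 X)
    (i2 : Z ⟶ A ⊗ (V ⊗ W)) (p2 : A ⊗ (V ⊗ W) ⟶ Z)
    (hZ1 : p2 ≫ i2 = nabla η μ (psiVW ψV ψW Δ)) (hZ2 : i2 ≫ p2 = 𝟙 Z)
    {Y : C} (iY : Y ⟶ X ⊗ W) (pY : X ⊗ W ⟶ Y)
    (hY1 : pY ≫ iY = nabPrime η μ ψV ψW Δ iX pX) (hY2 : iY ≫ pY = 𝟙 Y) :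
    (iY ≫ (iX ▷ W) ≫ (α_ A V W).hom ≫ p2) ≫
          (i2 ≫ (α_ A V W).inv ≫ (pX ▷ W) ≫ pY) = 𝟙 Y ∧
      (i2 ≫ (α_ A V W).inv ≫ (pX ▷ W) ≫ pY) ≫
          (iY ≫ (iX ▷ W) ≫ (α_ A V W).hom ≫ p2) = 𝟙 Z := by
  have hΔ2 := hΔ.2
  constructor
  · have e1 : (iY ≫ (iX ▷ W) ≫ (α_ A V W).hom ≫ p2) ≫
        (i2 ≫ (α_ A V W).inv ≫ (pX ▷ W) ≫ pY)
        = iY ≫ nabPrime η μ ψV ψW Δ iX pX ≫ pY := by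
      simp only [nabPrime, Category.assoc]
      slice_lhs 4 5 => rw [hZ1]
      simp only [Category.assoc]
    rw [e1, ← hY1]
    simp only [Category.assoc, reassoc_of% hY2, hY2]
  · have m1 := M1 ψW Δ hA hψV hΔ2
    have m2 := M2 ψW Δ hA hψV
    simp only [Category.assoc]
    rw [reassoc_of% hY1]
    simp only [nabPrime, Category.assoc]
    rw [← comp_whiskerRight_assoc pX iX, hX1]
    slice_lhs 7 8 => rw [← comp_whiskerRight, hX1]
    simp only [Category.assoc]
    rw [reassoc_of% m2, reassoc_of% m1, ← hZ1]
    simp only [Category.assoc, reassoc_of% hZ2, hZ2]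

end IteratedWCP
end

section
/- Let S, T, D be monoids in a strict monoidal category and let λ1 : T⊗S → S⊗T, λ2 : D⊗T → T⊗D, λ3 : D⊗S → S⊗D be weak distributive laws satisfying the Yang–Baxter relation. Then Δ = ∇_{T⊗D} is a link morphism between the quadruples 𝕊_T and 𝕊_D, i.e. with ψ_{T⊗D} = (λ1⊗D)∘(T⊗λ3)∘(∇_{T⊗D}⊗S) and ∇_{S⊗T⊗D} = (μ_S⊗T⊗D)∘(S⊗ψ_{T⊗D})∘(S⊗T⊗D⊗η_S), the following two equalities hold: (S⊗∇_{T⊗D})∘ψ_{T⊗D} = ψ_{T⊗D} and ψ_{T⊗D} = ∇_{S⊗T⊗D}∘(λ1⊗D)∘(T⊗λ3). -/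
open CategoryTheory MonoidalCategory

namespace IteratedWCP

universe v u

variable {C : Type u} [Category.{v} C] [MonoidalCategory C]

section AuxWCP

variable {C : Type u} [Category.{v} C] [MonoidalCategory C]

/-- slide a morphism past an insertion of `h : 𝟙 ⟶ E` at the right end -/
theorem eta_slide {X Y E : C} (f : X ⟶ Y) (h : 𝟙_ C ⟶ E) :
    f ≫ (ρ_ Y).inv ≫ (Y ◁ h) = (ρ_ X).inv ≫ (X ◁ h) ≫ (f ▷ E) := by
  rw [whisker_exchange]
  monoidal

/-- `λ ∘ ∇ = λ` for the weak distributive law `l2 : D ⊗ T ⟶ T ⊗ D`. -/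
theorem wdl_absorb {T D : C} (ηT : 𝟙_ C ⟶ T) (μT : T ⊗ T ⟶ T)
    (ηD : 𝟙_ C ⟶ D) (μD : D ⊗ D ⟶ D) (l2 : D ⊗ T ⟶ T ⊗ D)
    (hT : IsMonoid ηT μT) (h2 : WDL ηD μD ηT μT l2) :
    l2 ≫ nabWDL ηT μT l2 = l2 := by
  have B2 := h2.2.1
  calc l2 ≫ nabWDL ηT μT l2
      = (l2 ≫ (ρ_ (T ⊗ D)).inv ≫ ((T ⊗ D) ◁ ηT)) ≫ (α_ T D T).hom ≫
          (T ◁ l2) ≫ (α_ T T D).inv ≫ (μT ▷ D) := by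
        simp only [nabWDL]; monoidal
    _ = ((ρ_ (D ⊗ T)).inv ≫ ((D ⊗ T) ◁ ηT) ≫ (l2 ▷ T)) ≫ (α_ T D T).hom ≫
          (T ◁ l2) ≫ (α_ T T D).inv ≫ (μT ▷ D) := by
        rw [eta_slide]
    _ = (ρ_ (D ⊗ T)).inv ≫ ((D ⊗ T) ◁ ηT) ≫ (α_ D T T).hom ≫
          ((α_ D T T).inv ≫ (l2 ▷ T) ≫ (α_ T D T).hom ≫ (T ◁ l2) ≫
            (α_ T T D).inv ≫ (μT ▷ D)) := by
        simp only [Category.assoc, Iso.hom_inv_id_assoc]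
    _ = (ρ_ (D ⊗ T)).inv ≫ ((D ⊗ T) ◁ ηT) ≫ (α_ D T T).hom ≫ ((D ◁ μT) ≫ l2) := by
        rw [← B2]
    _ = (D ◁ ((ρ_ T).inv ≫ (T ◁ ηT) ≫ μT)) ≫ l2 := by monoidal
    _ = l2 := by rw [hT.2.1]; simp

end AuxWCP
section AuxWCP2

variable {C : Type u} [Category.{v} C] [MonoidalCategory C]
variable {S T D : C}

/-- YB with `η_T` inserted in the middle. -/
theorem yb_etaT (ηT : 𝟙_ C ⟶ T) (l1 : T ⊗ S ⟶ S ⊗ T) (l2 : D ⊗ T ⟶ T ⊗ D)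
    (l3 : D ⊗ S ⟶ S ⊗ D) (hyb : YB l1 l2 l3) :
    (((ρ_ D).inv ≫ (D ◁ ηT) ≫ l2) ▷ S) ≫ (α_ T D S).hom ≫ (T ◁ l3) ≫
        (α_ T S D).inv ≫ (l1 ▷ D) ≫ (α_ S T D).hom
      = (D ◁ ((λ_ S).inv ≫ (ηT ▷ S) ≫ l1)) ≫ (α_ D S T).inv ≫ (l3 ▷ T) ≫
          (α_ S D T).hom ≫ (S ◁ l2) := by
  have h := congrArg (fun x => ((ρ_ D).inv ▷ S) ≫ (((D ◁ ηT) ▷ S) ≫ x)) hyb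
  calc (((ρ_ D).inv ≫ (D ◁ ηT) ≫ l2) ▷ S) ≫ (α_ T D S).hom ≫ (T ◁ l3) ≫
        (α_ T S D).inv ≫ (l1 ▷ D) ≫ (α_ S T D).hom
      = ((ρ_ D).inv ▷ S) ≫ (((D ◁ ηT) ▷ S) ≫ ((l2 ▷ S) ≫ (α_ T D S).hom ≫
          (T ◁ l3) ≫ (α_ T S D).inv ≫ (l1 ▷ D) ≫ (α_ S T D).hom)) := by
        simp only [comp_whiskerRight, Category.assoc]
    _ = ((ρ_ D).inv ▷ S) ≫ (((D ◁ ηT) ▷ S) ≫ ((α_ D T S).hom ≫ (D ◁ l1) ≫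
          (α_ D S T).inv ≫ (l3 ▷ T) ≫ (α_ S D T).hom ≫ (S ◁ l2))) := by
        rw [← h]
    _ = (D ◁ ((λ_ S).inv ≫ (ηT ▷ S) ≫ l1)) ≫ (α_ D S T).inv ≫ (l3 ▷ T) ≫
          (α_ S D T).hom ≫ (S ◁ l2) := by
        monoidal

/-- YB with `η_T` inserted in front and `η_S` at the end
(the "inner2" identity). -/
theorem yb_inner2 (ηT : 𝟙_ C ⟶ T) (ηS : 𝟙_ C ⟶ S) (l1 : T ⊗ S ⟶ S ⊗ T)
    (l2 : D ⊗ T ⟶ T ⊗ D) (l3 : D ⊗ S ⟶ S ⊗ D) (hyb : YB l1 l2 l3) :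
    ((ρ_ D).inv ≫ (D ◁ ηT) ≫ l2) ≫ (T ◁ ((ρ_ D).inv ≫ (D ◁ ηS) ≫ l3)) ≫
        (α_ T S D).inv ≫ (l1 ▷ D) ≫ (α_ S T D).hom
      = (ρ_ D).inv ≫ (D ◁ (ηT ≫ (ρ_ T).inv ≫ (T ◁ ηS) ≫ l1)) ≫
          (α_ D S T).inv ≫ (l3 ▷ T) ≫ (α_ S D T).hom ≫ (S ◁ l2) := by
  have h := congrArg
    (fun x => (ρ_ D).inv ≫ ((D ◁ ηT) ≫ ((ρ_ (D ⊗ T)).inv ≫ (((D ⊗ T) ◁ ηS) ≫ x)))) hyb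
  calc ((ρ_ D).inv ≫ (D ◁ ηT) ≫ l2) ≫ (T ◁ ((ρ_ D).inv ≫ (D ◁ ηS) ≫ l3)) ≫
        (α_ T S D).inv ≫ (l1 ▷ D) ≫ (α_ S T D).hom
      = (ρ_ D).inv ≫ (D ◁ ηT) ≫ (l2 ≫ (ρ_ (T ⊗ D)).inv ≫ ((T ⊗ D) ◁ ηS)) ≫
          (α_ T D S).hom ≫ (T ◁ l3) ≫ (α_ T S D).inv ≫ (l1 ▷ D) ≫ (α_ S T D).hom := by
        monoidal
    _ = (ρ_ D).inv ≫ (D ◁ ηT) ≫ ((ρ_ (D ⊗ T)).inv ≫ ((D ⊗ T) ◁ ηS) ≫ (l2 ▷ S)) ≫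
          (α_ T D S).hom ≫ (T ◁ l3) ≫ (α_ T S D).inv ≫ (l1 ▷ D) ≫ (α_ S T D).hom := by
        rw [eta_slide]
    _ = (ρ_ D).inv ≫ ((D ◁ ηT) ≫ ((ρ_ (D ⊗ T)).inv ≫ (((D ⊗ T) ◁ ηS) ≫
          ((l2 ▷ S) ≫ (α_ T D S).hom ≫ (T ◁ l3) ≫ (α_ T S D).inv ≫
            (l1 ▷ D) ≫ (α_ S T D).hom)))) := by
        simp only [Category.assoc]
    _ = (ρ_ D).inv ≫ ((D ◁ ηT) ≫ ((ρ_ (D ⊗ T)).inv ≫ (((D ⊗ T) ◁ ηS) ≫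
          ((α_ D T S).hom ≫ (D ◁ l1) ≫ (α_ D S T).inv ≫ (l3 ▷ T) ≫
            (α_ S D T).hom ≫ (S ◁ l2))))) := by
        rw [← h]
    _ = (ρ_ D).inv ≫ (D ◁ (ηT ≫ (ρ_ T).inv ≫ (T ◁ ηS) ≫ l1)) ≫
          (α_ D S T).inv ≫ (l3 ▷ T) ≫ (α_ S D T).hom ≫ (S ◁ l2) := by
        monoidal

/-- `w = f1` : the key unit identity. -/
theorem w_eq_f1 (ηS : 𝟙_ C ⟶ S) (μS : S ⊗ S ⟶ S) (ηT : 𝟙_ C ⟶ T)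
    (μT : T ⊗ T ⟶ T) (l1 : T ⊗ S ⟶ S ⊗ T)
    (hT : IsMonoid ηT μT) (h1 : WDL ηT μT ηS μS l1) :
    (ρ_ S).inv ≫ (S ◁ (ηT ≫ (ρ_ T).inv ≫ (T ◁ ηS) ≫ l1)) ≫
        (α_ S S T).inv ≫ (μS ▷ T)
      = (λ_ S).inv ≫ (ηT ▷ S) ≫ l1 := by
  have A3 := h1.2.2
  calc (ρ_ S).inv ≫ (S ◁ (ηT ≫ (ρ_ T).inv ≫ (T ◁ ηS) ≫ l1)) ≫
        (α_ S S T).inv ≫ (μS ▷ T)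
      = (ρ_ S).inv ≫ (S ◁ ηT) ≫ ((S ◁ ((ρ_ T).inv ≫ (T ◁ ηS) ≫ l1)) ≫
          (α_ S S T).inv ≫ (μS ▷ T)) := by monoidal
    _ = (ρ_ S).inv ≫ (S ◁ ηT) ≫ (((λ_ S).inv ≫ (ηT ▷ S) ≫ l1) ▷ T) ≫
          (α_ S T T).hom ≫ (S ◁ μT) := by rw [← A3]
    _ = (((λ_ S).inv ≫ (ηT ▷ S) ≫ l1) ≫ (ρ_ (S ⊗ T)).inv ≫ ((S ⊗ T) ◁ ηT)) ≫
          (α_ S T T).hom ≫ (S ◁ μT) := by rw [eta_slide]; simp only [Category.assoc]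
    _ = ((λ_ S).inv ≫ (ηT ▷ S) ≫ l1) ≫ (S ◁ ((ρ_ T).inv ≫ (T ◁ ηT) ≫ μT)) := by
        monoidal
    _ = (λ_ S).inv ≫ (ηT ▷ S) ≫ l1 := by rw [hT.2.1]; simp

end AuxWCP2
section AuxWCP3

variable {C : Type u} [Category.{v} C] [MonoidalCategory C]
variable {S T D : C}

/-- `(μT ▷ D) ≫ ∇ = (T ◁ ∇) ≫ (μT ▷ D)`. -/
theorem mu_nab (ηT : 𝟙_ C ⟶ T) (μT : T ⊗ T ⟶ T) (l2 : D ⊗ T ⟶ T ⊗ D)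
    (hT : IsMonoid ηT μT) :
    (μT ▷ D) ≫ nabWDL ηT μT l2
      = (α_ T T D).hom ≫ (T ◁ nabWDL ηT μT l2) ≫ (α_ T T D).inv ≫ (μT ▷ D) := by
  have hassoc := hT.2.2
  calc (μT ▷ D) ≫ nabWDL ηT μT l2
      = ((μT ▷ D) ≫ (T ◁ ((ρ_ D).inv ≫ (D ◁ ηT) ≫ l2))) ≫ (α_ T T D).inv ≫
          (μT ▷ D) := by
        simp only [nabWDL, Category.assoc]
    _ = (((T ⊗ T) ◁ ((ρ_ D).inv ≫ (D ◁ ηT) ≫ l2)) ≫ (μT ▷ (T ⊗ D))) ≫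
          (α_ T T D).inv ≫ (μT ▷ D) := by
        rw [whisker_exchange]
    _ = ((T ⊗ T) ◁ ((ρ_ D).inv ≫ (D ◁ ηT) ≫ l2)) ≫ (α_ (T ⊗ T) T D).inv ≫
          (((μT ▷ T) ≫ μT) ▷ D) := by
        monoidal
    _ = ((T ⊗ T) ◁ ((ρ_ D).inv ≫ (D ◁ ηT) ≫ l2)) ≫ (α_ (T ⊗ T) T D).inv ≫
          (((α_ T T T).hom ≫ (T ◁ μT) ≫ μT) ▷ D) := by
        rw [hassoc]
    _ = (α_ T T D).hom ≫ (T ◁ nabWDL ηT μT l2) ≫ (α_ T T D).inv ≫ (μT ▷ D) := by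
        simp only [nabWDL]; monoidal

/-- The common normal form. -/
def Kexpr (ηT : 𝟙_ C ⟶ T) (μT : T ⊗ T ⟶ T) (l1 : T ⊗ S ⟶ S ⊗ T)
    (l2 : D ⊗ T ⟶ T ⊗ D) (l3 : D ⊗ S ⟶ S ⊗ D) : (T ⊗ D) ⊗ S ⟶ S ⊗ (T ⊗ D) :=
  ((T ⊗ D) ◁ ((λ_ S).inv ≫ (ηT ▷ S) ≫ l1)) ≫ (α_ T D (S ⊗ T)).hom ≫
    (T ◁ (α_ D S T).inv) ≫ (T ◁ (l3 ▷ T)) ≫ (T ◁ (α_ S D T).hom) ≫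
    (T ◁ (S ◁ l2)) ≫ (α_ T S (T ⊗ D)).inv ≫ (l1 ▷ (T ⊗ D)) ≫
    (α_ S T (T ⊗ D)).hom ≫ (S ◁ (α_ T T D).inv) ≫ (S ◁ (μT ▷ D))

theorem P1 (ηS : 𝟙_ C ⟶ S) (μS : S ⊗ S ⟶ S) (ηT : 𝟙_ C ⟶ T) (μT : T ⊗ T ⟶ T)
    (l1 : T ⊗ S ⟶ S ⊗ T) (l2 : D ⊗ T ⟶ T ⊗ D) (l3 : D ⊗ S ⟶ S ⊗ D)
    (h1 : WDL ηT μT ηS μS l1) (hyb : YB l1 l2 l3) :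
    psiVW l1 l3 (nabWDL ηT μT l2) = Kexpr ηT μT l1 l2 l3 := by
  have hA1 := h1.1
  calc psiVW l1 l3 (nabWDL ηT μT l2)
      = ((T ◁ ((ρ_ D).inv ≫ (D ◁ ηT) ≫ l2)) ▷ S) ≫ ((α_ T T D).inv ▷ S) ≫
          (α_ (T ⊗ T) D S).hom ≫ ((μT ▷ (D ⊗ S)) ≫ ((T ◁ l3))) ≫
          (α_ T S D).inv ≫ (l1 ▷ D) ≫ (α_ S T D).hom := by
        simp only [psiVW, psi2, nabWDL]; monoidal
    _ = ((T ◁ ((ρ_ D).inv ≫ (D ◁ ηT) ≫ l2)) ▷ S) ≫ ((α_ T T D).inv ▷ S) ≫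
          (α_ (T ⊗ T) D S).hom ≫ (((T ⊗ T) ◁ l3) ≫ (μT ▷ (S ⊗ D))) ≫
          (α_ T S D).inv ≫ (l1 ▷ D) ≫ (α_ S T D).hom := by
        rw [← whisker_exchange]
    _ = ((T ◁ ((ρ_ D).inv ≫ (D ◁ ηT) ≫ l2)) ▷ S) ≫ ((α_ T T D).inv ▷ S) ≫
          (α_ (T ⊗ T) D S).hom ≫ ((T ⊗ T) ◁ l3) ≫ (α_ (T ⊗ T) S D).inv ≫
          (((μT ▷ S) ≫ l1) ▷ D) ≫ (α_ S T D).hom := by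
        monoidal
    _ = ((T ◁ ((ρ_ D).inv ≫ (D ◁ ηT) ≫ l2)) ▷ S) ≫ ((α_ T T D).inv ▷ S) ≫
          (α_ (T ⊗ T) D S).hom ≫ ((T ⊗ T) ◁ l3) ≫ (α_ (T ⊗ T) S D).inv ≫
          (((α_ T T S).hom ≫ (T ◁ l1) ≫ (α_ T S T).inv ≫ (l1 ▷ T) ≫
            (α_ S T T).hom ≫ (S ◁ μT)) ▷ D) ≫ (α_ S T D).hom := by
        rw [hA1]
    _ = (α_ T D S).hom ≫
          (T ◁ ((((ρ_ D).inv ≫ (D ◁ ηT) ≫ l2) ▷ S) ≫ (α_ T D S).hom ≫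
            (T ◁ l3) ≫ (α_ T S D).inv ≫ (l1 ▷ D) ≫ (α_ S T D).hom)) ≫
          (α_ T S (T ⊗ D)).inv ≫ (l1 ▷ (T ⊗ D)) ≫ (α_ S T (T ⊗ D)).hom ≫
          (S ◁ (α_ T T D).inv) ≫ (S ◁ (μT ▷ D)) := by
        monoidal
    _ = (α_ T D S).hom ≫
          (T ◁ ((D ◁ ((λ_ S).inv ≫ (ηT ▷ S) ≫ l1)) ≫ (α_ D S T).inv ≫
            (l3 ▷ T) ≫ (α_ S D T).hom ≫ (S ◁ l2))) ≫
          (α_ T S (T ⊗ D)).inv ≫ (l1 ▷ (T ⊗ D)) ≫ (α_ S T (T ⊗ D)).hom ≫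
          (S ◁ (α_ T T D).inv) ≫ (S ◁ (μT ▷ D)) := by
        rw [yb_etaT ηT l1 l2 l3 hyb]
    _ = Kexpr ηT μT l1 l2 l3 := by
        simp only [Kexpr]; monoidal

end AuxWCP3
section AuxWCP4

variable {C : Type u} [Category.{v} C] [MonoidalCategory C]
variable {S T D : C}

theorem P3 (ηT : 𝟙_ C ⟶ T) (μT : T ⊗ T ⟶ T) (ηD : 𝟙_ C ⟶ D) (μD : D ⊗ D ⟶ D)
    (l1 : T ⊗ S ⟶ S ⊗ T) (l2 : D ⊗ T ⟶ T ⊗ D) (l3 : D ⊗ S ⟶ S ⊗ D)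
    (hT : IsMonoid ηT μT) (h2 : WDL ηD μD ηT μT l2) :
    Kexpr ηT μT l1 l2 l3 ≫ (S ◁ nabWDL ηT μT l2) = Kexpr ηT μT l1 l2 l3 := by
  calc Kexpr ηT μT l1 l2 l3 ≫ (S ◁ nabWDL ηT μT l2)
      = ((T ⊗ D) ◁ ((λ_ S).inv ≫ (ηT ▷ S) ≫ l1)) ≫ (α_ T D (S ⊗ T)).hom ≫
          (T ◁ (α_ D S T).inv) ≫ (T ◁ (l3 ▷ T)) ≫ (T ◁ (α_ S D T).hom) ≫
          (T ◁ (S ◁ l2)) ≫ (α_ T S (T ⊗ D)).inv ≫ (l1 ▷ (T ⊗ D)) ≫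
          (α_ S T (T ⊗ D)).hom ≫ (S ◁ (α_ T T D).inv) ≫
          (S ◁ ((μT ▷ D) ≫ nabWDL ηT μT l2)) := by
        simp only [Kexpr]; monoidal
    _ = ((T ⊗ D) ◁ ((λ_ S).inv ≫ (ηT ▷ S) ≫ l1)) ≫ (α_ T D (S ⊗ T)).hom ≫
          (T ◁ (α_ D S T).inv) ≫ (T ◁ (l3 ▷ T)) ≫ (T ◁ (α_ S D T).hom) ≫
          (T ◁ (S ◁ l2)) ≫ (α_ T S (T ⊗ D)).inv ≫ (l1 ▷ (T ⊗ D)) ≫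
          (α_ S T (T ⊗ D)).hom ≫ (S ◁ (α_ T T D).inv) ≫
          (S ◁ ((α_ T T D).hom ≫ (T ◁ nabWDL ηT μT l2) ≫ (α_ T T D).inv ≫
            (μT ▷ D))) := by
        rw [mu_nab ηT μT l2 hT]
    _ = ((T ⊗ D) ◁ ((λ_ S).inv ≫ (ηT ▷ S) ≫ l1)) ≫ (α_ T D (S ⊗ T)).hom ≫
          (T ◁ (α_ D S T).inv) ≫ (T ◁ (l3 ▷ T)) ≫ (T ◁ (α_ S D T).hom) ≫
          (T ◁ (S ◁ l2)) ≫ (α_ T S (T ⊗ D)).inv ≫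
          ((l1 ▷ (T ⊗ D)) ≫ ((S ⊗ T) ◁ nabWDL ηT μT l2)) ≫
          (α_ S T (T ⊗ D)).hom ≫ (S ◁ (α_ T T D).inv) ≫ (S ◁ (μT ▷ D)) := by
        monoidal
    _ = ((T ⊗ D) ◁ ((λ_ S).inv ≫ (ηT ▷ S) ≫ l1)) ≫ (α_ T D (S ⊗ T)).hom ≫
          (T ◁ (α_ D S T).inv) ≫ (T ◁ (l3 ▷ T)) ≫ (T ◁ (α_ S D T).hom) ≫
          (T ◁ (S ◁ l2)) ≫ (α_ T S (T ⊗ D)).inv ≫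
          (((T ⊗ S) ◁ nabWDL ηT μT l2) ≫ (l1 ▷ (T ⊗ D))) ≫
          (α_ S T (T ⊗ D)).hom ≫ (S ◁ (α_ T T D).inv) ≫ (S ◁ (μT ▷ D)) := by
        rw [whisker_exchange]
    _ = ((T ⊗ D) ◁ ((λ_ S).inv ≫ (ηT ▷ S) ≫ l1)) ≫ (α_ T D (S ⊗ T)).hom ≫
          (T ◁ (α_ D S T).inv) ≫ (T ◁ (l3 ▷ T)) ≫ (T ◁ (α_ S D T).hom) ≫
          (T ◁ (S ◁ (l2 ≫ nabWDL ηT μT l2))) ≫ (α_ T S (T ⊗ D)).inv ≫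
          (l1 ▷ (T ⊗ D)) ≫
          (α_ S T (T ⊗ D)).hom ≫ (S ◁ (α_ T T D).inv) ≫ (S ◁ (μT ▷ D)) := by
        monoidal
    _ = Kexpr ηT μT l1 l2 l3 := by
        rw [wdl_absorb ηT μT ηD μD l2 hT h2]; simp only [Kexpr]

end AuxWCP4
section AuxWCP5

variable {C : Type u} [Category.{v} C] [MonoidalCategory C]
variable {S T D : C}

set_option maxHeartbeats 1600000 in
theorem P2 (ηS : 𝟙_ C ⟶ S) (μS : S ⊗ S ⟶ S) (ηT : 𝟙_ C ⟶ T) (μT : T ⊗ T ⟶ T)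
    (ηD : 𝟙_ C ⟶ D) (μD : D ⊗ D ⟶ D)
    (l1 : T ⊗ S ⟶ S ⊗ T) (l2 : D ⊗ T ⟶ T ⊗ D) (l3 : D ⊗ S ⟶ S ⊗ D)
    (hT : IsMonoid ηT μT) (h1 : WDL ηT μT ηS μS l1) (h3 : WDL ηD μD ηS μS l3)
    (hyb : YB l1 l2 l3) :
    psi2 l1 l3 ≫ nabla ηS μS (psiVW l1 l3 (nabWDL ηT μT l2))
      = Kexpr ηT μT l1 l2 l3 := by
  calc psi2 l1 l3 ≫ nabla ηS μS (psiVW l1 l3 (nabWDL ηT μT l2))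
      -- c1
      = (α_ T D S).hom ≫ (T ◁ l3) ≫ (α_ T S D).inv ≫ (l1 ▷ D) ≫ (α_ S T D).hom ≫
        (ρ_ (S ⊗ (T ⊗ D))).inv ≫ ((S ⊗ (T ⊗ D)) ◁ ηS) ≫ (α_ S (T ⊗ D) S).hom ≫
        (S ◁ ((T ◁ ((ρ_ D).inv ≫ (D ◁ ηT) ≫ l2)) ▷ S)) ≫
        (S ◁ ((α_ T T D).inv ▷ S)) ≫ (S ◁ (α_ (T ⊗ T) D S).hom) ≫
        (S ◁ ((μT ▷ (D ⊗ S)) ≫ (T ◁ l3))) ≫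
        (S ◁ (α_ T S D).inv) ≫ (S ◁ (l1 ▷ D)) ≫ (S ◁ (α_ S T D).hom) ≫
        (α_ S S (T ⊗ D)).inv ≫ (μS ▷ (T ⊗ D)) := by
        simp only [psi2, nabla, psiVW, nabWDL]; monoidal
    _ = (α_ T D S).hom ≫ (T ◁ l3) ≫ (α_ T S D).inv ≫ (l1 ▷ D) ≫ (α_ S T D).hom ≫
        (ρ_ (S ⊗ (T ⊗ D))).inv ≫ ((S ⊗ (T ⊗ D)) ◁ ηS) ≫ (α_ S (T ⊗ D) S).hom ≫
        (S ◁ ((T ◁ ((ρ_ D).inv ≫ (D ◁ ηT) ≫ l2)) ▷ S)) ≫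
        (S ◁ ((α_ T T D).inv ▷ S)) ≫ (S ◁ (α_ (T ⊗ T) D S).hom) ≫
        (S ◁ (((T ⊗ T) ◁ l3) ≫ (μT ▷ (S ⊗ D)))) ≫
        (S ◁ (α_ T S D).inv) ≫ (S ◁ (l1 ▷ D)) ≫ (S ◁ (α_ S T D).hom) ≫
        (α_ S S (T ⊗ D)).inv ≫ (μS ▷ (T ⊗ D)) := by
        rw [← whisker_exchange μT l3]
      -- A1 preparation
    _ = (α_ T D S).hom ≫ (T ◁ l3) ≫ (α_ T S D).inv ≫ (l1 ▷ D) ≫ (α_ S T D).hom ≫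
        (ρ_ (S ⊗ (T ⊗ D))).inv ≫ ((S ⊗ (T ⊗ D)) ◁ ηS) ≫ (α_ S (T ⊗ D) S).hom ≫
        (S ◁ ((T ◁ ((ρ_ D).inv ≫ (D ◁ ηT) ≫ l2)) ▷ S)) ≫
        (S ◁ ((α_ T T D).inv ▷ S)) ≫ (S ◁ (α_ (T ⊗ T) D S).hom) ≫
        (S ◁ ((T ⊗ T) ◁ l3)) ≫ (S ◁ (α_ (T ⊗ T) S D).inv) ≫
        (S ◁ (((μT ▷ S) ≫ l1) ▷ D)) ≫ (S ◁ (α_ S T D).hom) ≫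
        (α_ S S (T ⊗ D)).inv ≫ (μS ▷ (T ⊗ D)) := by
        monoidal
    _ = (α_ T D S).hom ≫ (T ◁ l3) ≫ (α_ T S D).inv ≫ (l1 ▷ D) ≫ (α_ S T D).hom ≫
        (ρ_ (S ⊗ (T ⊗ D))).inv ≫ ((S ⊗ (T ⊗ D)) ◁ ηS) ≫ (α_ S (T ⊗ D) S).hom ≫
        (S ◁ ((T ◁ ((ρ_ D).inv ≫ (D ◁ ηT) ≫ l2)) ▷ S)) ≫
        (S ◁ ((α_ T T D).inv ▷ S)) ≫ (S ◁ (α_ (T ⊗ T) D S).hom) ≫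
        (S ◁ ((T ⊗ T) ◁ l3)) ≫ (S ◁ (α_ (T ⊗ T) S D).inv) ≫
        (S ◁ (((α_ T T S).hom ≫ (T ◁ l1) ≫ (α_ T S T).inv ≫ (l1 ▷ T) ≫
          (α_ S T T).hom ≫ (S ◁ μT)) ▷ D)) ≫ (S ◁ (α_ S T D).hom) ≫
        (α_ S S (T ⊗ D)).inv ≫ (μS ▷ (T ⊗ D)) := by
        rw [h1.1]
      -- slide ηS insertion past e2
    _ = (α_ T D S).hom ≫ (T ◁ l3) ≫ (α_ T S D).inv ≫ (l1 ▷ D) ≫ (α_ S T D).hom ≫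
        (ρ_ (S ⊗ (T ⊗ D))).inv ≫
        ((((S ⊗ (T ⊗ D)) ◁ ηS) ≫ ((S ◁ (T ◁ ((ρ_ D).inv ≫ (D ◁ ηT) ≫ l2))) ▷ S))) ≫
        (α_ S (T ⊗ (T ⊗ D)) S).hom ≫ (S ◁ (α_ T (T ⊗ D) S).hom) ≫
        (S ◁ (T ◁ (α_ T D S).hom)) ≫ (S ◁ (T ◁ (T ◁ l3))) ≫
        (S ◁ (T ◁ (α_ T S D).inv)) ≫ (S ◁ (T ◁ (l1 ▷ D))) ≫
        (S ◁ (T ◁ (α_ S T D).hom)) ≫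
        (S ◁ (α_ T S (T ⊗ D)).inv) ≫ (S ◁ (l1 ▷ (T ⊗ D))) ≫
        (S ◁ (α_ S T (T ⊗ D)).hom) ≫
        (S ◁ (S ◁ (α_ T T D).inv)) ≫ (S ◁ (S ◁ (μT ▷ D))) ≫
        (α_ S S (T ⊗ D)).inv ≫ (μS ▷ (T ⊗ D)) := by
        monoidal
    _ = (α_ T D S).hom ≫ (T ◁ l3) ≫ (α_ T S D).inv ≫ (l1 ▷ D) ≫ (α_ S T D).hom ≫
        (ρ_ (S ⊗ (T ⊗ D))).inv ≫
        ((((S ◁ (T ◁ ((ρ_ D).inv ≫ (D ◁ ηT) ≫ l2))) ▷ 𝟙_ C) ≫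
          ((S ⊗ (T ⊗ (T ⊗ D))) ◁ ηS))) ≫
        (α_ S (T ⊗ (T ⊗ D)) S).hom ≫ (S ◁ (α_ T (T ⊗ D) S).hom) ≫
        (S ◁ (T ◁ (α_ T D S).hom)) ≫ (S ◁ (T ◁ (T ◁ l3))) ≫
        (S ◁ (T ◁ (α_ T S D).inv)) ≫ (S ◁ (T ◁ (l1 ▷ D))) ≫
        (S ◁ (T ◁ (α_ S T D).hom)) ≫
        (S ◁ (α_ T S (T ⊗ D)).inv) ≫ (S ◁ (l1 ▷ (T ⊗ D))) ≫
        (S ◁ (α_ S T (T ⊗ D)).hom) ≫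
        (S ◁ (S ◁ (α_ T T D).inv)) ≫ (S ◁ (S ◁ (μT ▷ D))) ≫
        (α_ S S (T ⊗ D)).inv ≫ (μS ▷ (T ⊗ D)) := by
        rw [whisker_exchange]
      -- form the inner2 chunk
    _ = (α_ T D S).hom ≫ (T ◁ l3) ≫ (α_ T S D).inv ≫ (l1 ▷ D) ≫ (α_ S T D).hom ≫
        (S ◁ (T ◁ (((ρ_ D).inv ≫ (D ◁ ηT) ≫ l2) ≫
          (T ◁ ((ρ_ D).inv ≫ (D ◁ ηS) ≫ l3)) ≫
          (α_ T S D).inv ≫ (l1 ▷ D) ≫ (α_ S T D).hom))) ≫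
        (S ◁ (α_ T S (T ⊗ D)).inv) ≫ (S ◁ (l1 ▷ (T ⊗ D))) ≫
        (S ◁ (α_ S T (T ⊗ D)).hom) ≫
        (S ◁ (S ◁ (α_ T T D).inv)) ≫ (S ◁ (S ◁ (μT ▷ D))) ≫
        (α_ S S (T ⊗ D)).inv ≫ (μS ▷ (T ⊗ D)) := by
        monoidal
    _ = (α_ T D S).hom ≫ (T ◁ l3) ≫ (α_ T S D).inv ≫ (l1 ▷ D) ≫ (α_ S T D).hom ≫
        (S ◁ (T ◁ ((ρ_ D).inv ≫
          (D ◁ (ηT ≫ (ρ_ T).inv ≫ (T ◁ ηS) ≫ l1)) ≫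
          (α_ D S T).inv ≫ (l3 ▷ T) ≫ (α_ S D T).hom ≫ (S ◁ l2)))) ≫
        (S ◁ (α_ T S (T ⊗ D)).inv) ≫ (S ◁ (l1 ▷ (T ⊗ D))) ≫
        (S ◁ (α_ S T (T ⊗ D)).hom) ≫
        (S ◁ (S ◁ (α_ T T D).inv)) ≫ (S ◁ (S ◁ (μT ▷ D))) ≫
        (α_ S S (T ⊗ D)).inv ≫ (μS ▷ (T ⊗ D)) := by
        rw [yb_inner2 ηT ηS l1 l2 l3 hyb]
      -- move the inner block before l1
    _ = (α_ T D S).hom ≫ (T ◁ l3) ≫ (α_ T S D).inv ≫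
        (((l1 ▷ D) ≫ ((S ⊗ T) ◁ ((ρ_ D).inv ≫
          (D ◁ (ηT ≫ (ρ_ T).inv ≫ (T ◁ ηS) ≫ l1)) ≫
          (α_ D S T).inv ≫ (l3 ▷ T) ≫ (α_ S D T).hom ≫ (S ◁ l2))))) ≫
        (α_ S T (S ⊗ (T ⊗ D))).hom ≫
        (S ◁ (α_ T S (T ⊗ D)).inv) ≫ (S ◁ (l1 ▷ (T ⊗ D))) ≫
        (S ◁ (α_ S T (T ⊗ D)).hom) ≫
        (S ◁ (S ◁ (α_ T T D).inv)) ≫ (S ◁ (S ◁ (μT ▷ D))) ≫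
        (α_ S S (T ⊗ D)).inv ≫ (μS ▷ (T ⊗ D)) := by
        monoidal
    _ = (α_ T D S).hom ≫ (T ◁ l3) ≫ (α_ T S D).inv ≫
        ((((T ⊗ S) ◁ ((ρ_ D).inv ≫
          (D ◁ (ηT ≫ (ρ_ T).inv ≫ (T ◁ ηS) ≫ l1)) ≫
          (α_ D S T).inv ≫ (l3 ▷ T) ≫ (α_ S D T).hom ≫ (S ◁ l2))) ≫
          (l1 ▷ (S ⊗ (T ⊗ D))))) ≫
        (α_ S T (S ⊗ (T ⊗ D))).hom ≫
        (S ◁ (α_ T S (T ⊗ D)).inv) ≫ (S ◁ (l1 ▷ (T ⊗ D))) ≫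
        (S ◁ (α_ S T (T ⊗ D)).hom) ≫
        (S ◁ (S ◁ (α_ T T D).inv)) ≫ (S ◁ (S ◁ (μT ▷ D))) ≫
        (α_ S S (T ⊗ D)).inv ≫ (μS ▷ (T ⊗ D)) := by
        rw [← whisker_exchange]
      -- prepare the μT / μS swap
    _ = (α_ T D S).hom ≫ (T ◁ l3) ≫ (α_ T S D).inv ≫
        ((T ⊗ S) ◁ ((ρ_ D).inv ≫
          (D ◁ (ηT ≫ (ρ_ T).inv ≫ (T ◁ ηS) ≫ l1)) ≫
          (α_ D S T).inv ≫ (l3 ▷ T) ≫ (α_ S D T).hom ≫ (S ◁ l2))) ≫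
        (l1 ▷ (S ⊗ (T ⊗ D))) ≫ (α_ S T (S ⊗ (T ⊗ D))).hom ≫
        (S ◁ (α_ T S (T ⊗ D)).inv) ≫ (S ◁ (l1 ▷ (T ⊗ D))) ≫
        (S ◁ (α_ S T (T ⊗ D)).hom) ≫ (α_ S S (T ⊗ (T ⊗ D))).inv ≫
        ((((S ⊗ S) ◁ ((α_ T T D).inv ≫ (μT ▷ D))) ≫ (μS ▷ (T ⊗ D)))) := by
        monoidal
    _ = (α_ T D S).hom ≫ (T ◁ l3) ≫ (α_ T S D).inv ≫
        ((T ⊗ S) ◁ ((ρ_ D).inv ≫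
          (D ◁ (ηT ≫ (ρ_ T).inv ≫ (T ◁ ηS) ≫ l1)) ≫
          (α_ D S T).inv ≫ (l3 ▷ T) ≫ (α_ S D T).hom ≫ (S ◁ l2))) ≫
        (l1 ▷ (S ⊗ (T ⊗ D))) ≫ (α_ S T (S ⊗ (T ⊗ D))).hom ≫
        (S ◁ (α_ T S (T ⊗ D)).inv) ≫ (S ◁ (l1 ▷ (T ⊗ D))) ≫
        (S ◁ (α_ S T (T ⊗ D)).hom) ≫ (α_ S S (T ⊗ (T ⊗ D))).inv ≫
        (((μS ▷ (T ⊗ (T ⊗ D))) ≫ (S ◁ ((α_ T T D).inv ≫ (μT ▷ D))))) := by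
        rw [whisker_exchange μS ((α_ T T D).inv ≫ (μT ▷ D))]
      -- A2
    _ = (α_ T D S).hom ≫ (T ◁ l3) ≫ (α_ T S D).inv ≫
        ((T ⊗ S) ◁ ((ρ_ D).inv ≫
          (D ◁ (ηT ≫ (ρ_ T).inv ≫ (T ◁ ηS) ≫ l1)) ≫
          (α_ D S T).inv ≫ (l3 ▷ T) ≫ (α_ S D T).hom ≫ (S ◁ l2))) ≫
        (α_ (T ⊗ S) S (T ⊗ D)).inv ≫ ((α_ T S S).hom ▷ (T ⊗ D)) ≫
        ((((α_ T S S).inv ≫ (l1 ▷ S) ≫ (α_ S T S).hom ≫ (S ◁ l1) ≫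
          (α_ S S T).inv ≫ (μS ▷ T)) ▷ (T ⊗ D))) ≫
        (α_ S T (T ⊗ D)).hom ≫ (S ◁ (α_ T T D).inv) ≫ (S ◁ (μT ▷ D)) := by
        monoidal
    _ = (α_ T D S).hom ≫ (T ◁ l3) ≫ (α_ T S D).inv ≫
        ((T ⊗ S) ◁ ((ρ_ D).inv ≫
          (D ◁ (ηT ≫ (ρ_ T).inv ≫ (T ◁ ηS) ≫ l1)) ≫
          (α_ D S T).inv ≫ (l3 ▷ T) ≫ (α_ S D T).hom ≫ (S ◁ l2))) ≫
        (α_ (T ⊗ S) S (T ⊗ D)).inv ≫ ((α_ T S S).hom ▷ (T ⊗ D)) ≫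
        ((((T ◁ μS) ≫ l1) ▷ (T ⊗ D))) ≫
        (α_ S T (T ⊗ D)).hom ≫ (S ◁ (α_ T T D).inv) ≫ (S ◁ (μT ▷ D)) := by
        rw [← h1.2.1]
      -- swap l2 and μS
    _ = (α_ T D S).hom ≫ (T ◁ l3) ≫ (α_ T S D).inv ≫
        ((T ⊗ S) ◁ ((ρ_ D).inv ≫
          (D ◁ (ηT ≫ (ρ_ T).inv ≫ (T ◁ ηS) ≫ l1)) ≫
          (α_ D S T).inv ≫ (l3 ▷ T) ≫ (α_ S D T).hom)) ≫
        (α_ (T ⊗ S) S (D ⊗ T)).inv ≫ ((α_ T S S).hom ▷ (D ⊗ T)) ≫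
        ((((T ⊗ (S ⊗ S)) ◁ l2) ≫ ((T ◁ μS) ▷ (T ⊗ D)))) ≫
        (l1 ▷ (T ⊗ D)) ≫
        (α_ S T (T ⊗ D)).hom ≫ (S ◁ (α_ T T D).inv) ≫ (S ◁ (μT ▷ D)) := by
        monoidal
    _ = (α_ T D S).hom ≫ (T ◁ l3) ≫ (α_ T S D).inv ≫
        ((T ⊗ S) ◁ ((ρ_ D).inv ≫
          (D ◁ (ηT ≫ (ρ_ T).inv ≫ (T ◁ ηS) ≫ l1)) ≫
          (α_ D S T).inv ≫ (l3 ▷ T) ≫ (α_ S D T).hom)) ≫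
        (α_ (T ⊗ S) S (D ⊗ T)).inv ≫ ((α_ T S S).hom ▷ (D ⊗ T)) ≫
        ((((T ◁ μS) ▷ (D ⊗ T)) ≫ ((T ⊗ S) ◁ l2))) ≫
        (l1 ▷ (T ⊗ D)) ≫
        (α_ S T (T ⊗ D)).hom ≫ (S ◁ (α_ T T D).inv) ≫ (S ◁ (μT ▷ D)) := by
        rw [whisker_exchange (T ◁ μS) l2]
      -- move u1 insertion to the very front
    _ = ((((α_ T D S).hom ≫ (T ◁ l3) ≫ (α_ T S D).inv) ≫
          (ρ_ ((T ⊗ S) ⊗ D)).inv ≫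
          (((T ⊗ S) ⊗ D) ◁ (ηT ≫ (ρ_ T).inv ≫ (T ◁ ηS) ≫ l1)))) ≫
        (α_ (T ⊗ S) D (S ⊗ T)).hom ≫
        ((T ⊗ S) ◁ (α_ D S T).inv) ≫ ((T ⊗ S) ◁ (l3 ▷ T)) ≫
        ((T ⊗ S) ◁ (α_ S D T).hom) ≫
        (α_ (T ⊗ S) S (D ⊗ T)).inv ≫ ((α_ T S S).hom ▷ (D ⊗ T)) ≫
        ((T ◁ μS) ▷ (D ⊗ T)) ≫ ((T ⊗ S) ◁ l2) ≫
        (l1 ▷ (T ⊗ D)) ≫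
        (α_ S T (T ⊗ D)).hom ≫ (S ◁ (α_ T T D).inv) ≫ (S ◁ (μT ▷ D)) := by
        monoidal
    _ = (((ρ_ ((T ⊗ D) ⊗ S)).inv ≫
          (((T ⊗ D) ⊗ S) ◁ (ηT ≫ (ρ_ T).inv ≫ (T ◁ ηS) ≫ l1)) ≫
          (((α_ T D S).hom ≫ (T ◁ l3) ≫ (α_ T S D).inv) ▷ (S ⊗ T)))) ≫
        (α_ (T ⊗ S) D (S ⊗ T)).hom ≫
        ((T ⊗ S) ◁ (α_ D S T).inv) ≫ ((T ⊗ S) ◁ (l3 ▷ T)) ≫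
        ((T ⊗ S) ◁ (α_ S D T).hom) ≫
        (α_ (T ⊗ S) S (D ⊗ T)).inv ≫ ((α_ T S S).hom ▷ (D ⊗ T)) ≫
        ((T ◁ μS) ▷ (D ⊗ T)) ≫ ((T ⊗ S) ◁ l2) ≫
        (l1 ▷ (T ⊗ D)) ≫
        (α_ S T (T ⊗ D)).hom ≫ (S ◁ (α_ T T D).inv) ≫ (S ◁ (μT ▷ D)) := by
        rw [eta_slide]
      -- C2 chunk
    _ = (ρ_ ((T ⊗ D) ⊗ S)).inv ≫
        (((T ⊗ D) ⊗ S) ◁ (ηT ≫ (ρ_ T).inv ≫ (T ◁ ηS) ≫ l1)) ≫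
        (α_ (T ⊗ D) S (S ⊗ T)).hom ≫ (α_ T D (S ⊗ (S ⊗ T))).hom ≫
        (T ◁ (D ◁ (α_ S S T).inv)) ≫ (T ◁ (α_ D (S ⊗ S) T).inv) ≫
        (T ◁ ((((α_ D S S).inv ≫ (l3 ▷ S) ≫ (α_ S D S).hom ≫ (S ◁ l3) ≫
          (α_ S S D).inv ≫ (μS ▷ D))) ▷ T)) ≫
        (T ◁ (α_ S D T).hom) ≫ (T ◁ (S ◁ l2)) ≫
        (α_ T S (T ⊗ D)).inv ≫ (l1 ▷ (T ⊗ D)) ≫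
        (α_ S T (T ⊗ D)).hom ≫ (S ◁ (α_ T T D).inv) ≫ (S ◁ (μT ▷ D)) := by
        monoidal
    _ = (ρ_ ((T ⊗ D) ⊗ S)).inv ≫
        (((T ⊗ D) ⊗ S) ◁ (ηT ≫ (ρ_ T).inv ≫ (T ◁ ηS) ≫ l1)) ≫
        (α_ (T ⊗ D) S (S ⊗ T)).hom ≫ (α_ T D (S ⊗ (S ⊗ T))).hom ≫
        (T ◁ (D ◁ (α_ S S T).inv)) ≫ (T ◁ (α_ D (S ⊗ S) T).inv) ≫
        (T ◁ ((((D ◁ μS) ≫ l3)) ▷ T)) ≫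
        (T ◁ (α_ S D T).hom) ≫ (T ◁ (S ◁ l2)) ≫
        (α_ T S (T ⊗ D)).inv ≫ (l1 ▷ (T ⊗ D)) ≫
        (α_ S T (T ⊗ D)).hom ≫ (S ◁ (α_ T T D).inv) ≫ (S ◁ (μT ▷ D)) := by
        rw [← h3.2.1]
      -- the w chunk
    _ = ((T ⊗ D) ◁ (((ρ_ S).inv ≫
          (S ◁ (ηT ≫ (ρ_ T).inv ≫ (T ◁ ηS) ≫ l1)) ≫
          (α_ S S T).inv ≫ (μS ▷ T)))) ≫
        (α_ T D (S ⊗ T)).hom ≫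
        (T ◁ (α_ D S T).inv) ≫ (T ◁ (l3 ▷ T)) ≫ (T ◁ (α_ S D T).hom) ≫
        (T ◁ (S ◁ l2)) ≫ (α_ T S (T ⊗ D)).inv ≫ (l1 ▷ (T ⊗ D)) ≫
        (α_ S T (T ⊗ D)).hom ≫ (S ◁ (α_ T T D).inv) ≫ (S ◁ (μT ▷ D)) := by
        monoidal
    _ = Kexpr ηT μT l1 l2 l3 := by
        rw [w_eq_f1 ηS μS ηT μT l1 hT h1]; simp only [Kexpr]

end AuxWCP5
theorem statement15 {S T D : C} (ηS : 𝟙_ C ⟶ S) (μS : S ⊗ S ⟶ S)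
    (ηT : 𝟙_ C ⟶ T) (μT : T ⊗ T ⟶ T) (ηD : 𝟙_ C ⟶ D) (μD : D ⊗ D ⟶ D)
    (hS : IsMonoid ηS μS) (hT : IsMonoid ηT μT) (hD : IsMonoid ηD μD)
    (l1 : T ⊗ S ⟶ S ⊗ T) (l2 : D ⊗ T ⟶ T ⊗ D) (l3 : D ⊗ S ⟶ S ⊗ D)
    (h1 : WDL ηT μT ηS μS l1) (h2 : WDL ηD μD ηT μT l2)
    (h3 : WDL ηD μD ηS μS l3) (hyb : YB l1 l2 l3) :
    psiVW l1 l3 (nabWDL ηT μT l2) ≫ (S ◁ nabWDL ηT μT l2)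
        = psiVW l1 l3 (nabWDL ηT μT l2) ∧
      psiVW l1 l3 (nabWDL ηT μT l2)
        = psi2 l1 l3 ≫ nabla ηS μS (psiVW l1 l3 (nabWDL ηT μT l2)) := by
  have hP1 := P1 ηS μS ηT μT l1 l2 l3 h1 hyb
  have hP3 := P3 ηT μT ηD μD l1 l2 l3 hT h2
  have hP2 := P2 ηS μS ηT μT ηD μD l1 l2 l3 hT h1 h3 hyb
  constructor
  · rw [hP1]; exact hP3
  · rw [hP2]; exact hP1

end IteratedWCP
end
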